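/- arXiv:1704.00708 — 8 statements merged into one kernel-verified Lean document; each statement's English description precedes it below -/
import Mathlib

section
/- Let U and Y be d×r real matrices such that U^T Y = Y^T U is positive semidefinite. Then ‖(U−Y)(U−Y)^T‖_F² ≤ 2‖UU^T − YY^T‖_F². -/
open Matrix BigOperators

noncomputable section

/-- Squared Frobenius norm of a real matrix. -/
def frobSq {m n : Type*} [Fintype m] [Fintype n] (A : Matrix m n ℝ) : ℝ :=
  ∑ i, ∑ j, (A i j) ^ 2

lemma frobSq_eq_trace {m n : Type*} [Fintype m] [Fintype n] (A : Matrix m n ℝ) :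
    frobSq A = (Aᵀ * A).trace := by
  simp [frobSq, Matrix.trace, Matrix.mul_apply, Matrix.diag, sq]
  rw [Finset.sum_comm]

lemma frobSq_nonneg {m n : Type*} [Fintype m] [Fintype n] (A : Matrix m n ℝ) :
    0 ≤ frobSq A :=
  Finset.sum_nonneg fun _ _ => Finset.sum_nonneg fun _ _ => sq_nonneg _

/-- If `UᵀY = YᵀU` is positive semidefinite, then
`‖(U−Y)(U−Y)ᵀ‖_F² ≤ 2‖UUᵀ − YYᵀ‖_F²`. -/
theorem stmt0 {d r : ℕ} (U Y : Matrix (Fin d) (Fin r) ℝ)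
    (hsym : Uᵀ * Y = Yᵀ * U) (hpsd : (Uᵀ * Y).PosSemidef) :
    frobSq ((U - Y) * (U - Y)ᵀ) ≤ 2 * frobSq (U * Uᵀ - Y * Yᵀ) := by
  set Δ := U - Y with hΔ
  set G := Uᵀ * U with hG
  set H := Yᵀ * Y with hH
  set S := Uᵀ * Y with hS
  have hK : Δᵀ * Δ = G + H - S - S := by
    simp only [hΔ, Matrix.transpose_sub, Matrix.sub_mul, Matrix.mul_sub, hG, hH, hS, ← hsym]
    abel
  have e1 : ((U*Uᵀ)*(U*Uᵀ)).trace = (G*G).trace := by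
    rw [Matrix.mul_assoc, Matrix.trace_mul_comm]
    simp only [hG, Matrix.mul_assoc]
  have e2 : ((Y*Yᵀ)*(Y*Yᵀ)).trace = (H*H).trace := by
    rw [Matrix.mul_assoc, Matrix.trace_mul_comm]
    simp only [hH, Matrix.mul_assoc]
  have e3 : ((U*Uᵀ)*(Y*Yᵀ)).trace = (S*S).trace := by
    rw [Matrix.mul_assoc, Matrix.trace_mul_comm]
    have : Uᵀ*(Y*Yᵀ)*U = S*(Yᵀ*U) := by simp only [hS, Matrix.mul_assoc]
    rw [this, ← hsym]
  have e4 : ((Y*Yᵀ)*(U*Uᵀ)).trace = (S*S).trace := by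
    rw [Matrix.mul_assoc, Matrix.trace_mul_comm]
    have : Yᵀ*(U*Uᵀ)*Y = (Yᵀ*U)*(Uᵀ*Y) := by simp only [Matrix.mul_assoc]
    rw [this, ← hsym, ← hS]
  have e5 : ((Δ*Δᵀ)*(Δ*Δᵀ)).trace = ((Δᵀ*Δ)*(Δᵀ*Δ)).trace := by
    rw [Matrix.mul_assoc, Matrix.trace_mul_comm]
    simp only [Matrix.mul_assoc]
  have cGH : (H*G).trace = (G*H).trace := Matrix.trace_mul_comm _ _
  have cGS : (S*G).trace = (G*S).trace := Matrix.trace_mul_comm _ _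
  have cHS : (S*H).trace = (H*S).trace := Matrix.trace_mul_comm _ _
  -- frobSq of UUᵀ - YYᵀ
  have fM : frobSq (U * Uᵀ - Y * Yᵀ) =
      (G*G).trace - 2*(S*S).trace + (H*H).trace := by
    rw [frobSq_eq_trace]
    simp only [Matrix.transpose_sub, Matrix.transpose_mul, Matrix.transpose_transpose,
      Matrix.sub_mul, Matrix.mul_sub, Matrix.trace_sub]
    rw [e1, e2, e3, e4]; ring
  -- frobSq of ΔΔᵀ
  have fD : frobSq (Δ * Δᵀ) =
      (G*G).trace + (H*H).trace + 4*(S*S).trace + 2*(G*H).trace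
        - 4*(G*S).trace - 4*(H*S).trace := by
    rw [frobSq_eq_trace]
    have hsymm : (Δ * Δᵀ)ᵀ = Δ * Δᵀ := by
      simp [Matrix.transpose_mul]
    rw [hsymm, e5, hK]
    simp only [Matrix.add_mul, Matrix.mul_add, Matrix.sub_mul, Matrix.mul_sub,
      Matrix.trace_add, Matrix.trace_sub]
    linarith
  -- frobSq of G - H
  have fGH : frobSq (G - H) = (G*G).trace - 2*(G*H).trace + (H*H).trace := by
    rw [frobSq_eq_trace]
    have : (G - H)ᵀ = G - H := by
      simp [hG, hH, Matrix.transpose_sub, Matrix.transpose_mul]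
    rw [this]
    simp only [Matrix.sub_mul, Matrix.mul_sub, Matrix.trace_sub]
    linarith
  -- trace of K * S
  have tK : ((Δᵀ*Δ)*S).trace = (G*S).trace + (H*S).trace - 2*(S*S).trace := by
    rw [hK]
    simp only [Matrix.add_mul, Matrix.sub_mul, Matrix.trace_add, Matrix.trace_sub]
    ring
  -- nonnegativity of trace of K * S
  have tnn : 0 ≤ ((Δᵀ*Δ)*S).trace := by
    obtain ⟨B, hB⟩ : ∃ B : Matrix (Fin r) (Fin r) ℝ, S = Bᴴ * B := by
      classical
      open scoped MatrixOrder in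
      obtain ⟨X, hX, -, hXX⟩ : ∃ X, IsSelfAdjoint X ∧ _ ∧ X * X = S :=
        CFC.exists_sqrt_of_isSelfAdjoint_of_quasispectrumRestricts
          hpsd.isHermitian (QuasispectrumRestricts.nnreal_of_nonneg hpsd.nonneg)
      exact ⟨X, by rw [← hXX, ← Matrix.star_eq_conjTranspose, hX.star_eq]⟩
    rw [hB, Matrix.conjTranspose_eq_transpose_of_trivial]
    have : (Δᵀ*Δ*(Bᵀ*B)).trace = ((Δ*Bᵀ)ᵀ*(Δ*Bᵀ)).trace := by
      rw [← Matrix.mul_assoc, Matrix.trace_mul_comm]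
      simp only [Matrix.transpose_mul, Matrix.transpose_transpose, Matrix.mul_assoc]
    rw [this, ← frobSq_eq_trace]
    exact frobSq_nonneg _
  have hGHnn := frobSq_nonneg (G - H)
  linarith [fM, fD, fGH, tK, tnn, hGHnn]
end
end

section
/- Let U and Y be d×r real matrices such that U^T Y = Y^T U is positive semidefinite. Then σ_min(U^T U)·‖U−Y‖_F² ≤ ‖(U−Y)U^T‖_F² ≤ (1/(2(√2−1)))·‖UU^T − YY^T‖_F². -/
open Matrix BigOperators

noncomputable section

lemma trace_nonneg_of_posSemidef {n : Type*} [Fintype n] {M : Matrix n n ℝ}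
    (h : M.PosSemidef) : 0 ≤ M.trace := by
  classical
  refine Finset.sum_nonneg fun i _ => ?_
  have := h.dotProduct_mulVec_nonneg (Pi.single i 1)
  simpa [Matrix.mulVec, dotProduct, Pi.single_apply] using this

lemma trace_mul_nonneg_of_posSemidef {n : Type*} [Fintype n] {A B : Matrix n n ℝ}
    (hA : A.PosSemidef) (hB : B.PosSemidef) : 0 ≤ (A * B).trace := by
  classical
  obtain ⟨m, v, hv⟩ := Matrix.posSemidef_iff_eq_sum_vecMulVec.mp hB
  rw [hv, Matrix.mul_sum, Matrix.trace_sum]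
  refine Finset.sum_nonneg fun k _ => ?_
  have := hA.dotProduct_mulVec_nonneg (v k)
  convert this using 1
  simp only [Matrix.trace, Matrix.diag, Matrix.mul_apply, vecMulVec_apply, dotProduct,
    Matrix.mulVec, Finset.mul_sum, star_trivial, Pi.star_apply]
  rw [Finset.sum_comm]
  refine Finset.sum_congr rfl fun i _ => Finset.sum_congr rfl fun j _ => ?_
  rw [← hA.1.apply i j, star_trivial]
  ring

lemma tr_conv {d r : ℕ} (W X Z T : Matrix (Fin d) (Fin r) ℝ) :
    (W * Xᵀ * (Z * Tᵀ)).trace = (Xᵀ * Z * (Tᵀ * W)).trace := by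
  rw [Matrix.mul_assoc, Matrix.trace_mul_comm]
  simp [Matrix.mul_assoc]

/-- If `UᵀY = YᵀU` is PSD, and `σmin` is a lower bound on the eigenvalues of `UᵀU`
(in particular one may take `σmin = σ_min(UᵀU)`), then
`σmin‖U−Y‖_F² ≤ ‖(U−Y)Uᵀ‖_F² ≤ (1/(2(√2−1)))‖UUᵀ − YYᵀ‖_F²`. -/
theorem stmt1 {d r : ℕ} (U Y : Matrix (Fin d) (Fin r) ℝ) (σmin : ℝ)
    (hσ : ∀ x : Fin r → ℝ, σmin * (∑ i, x i ^ 2) ≤ x ⬝ᵥ (Uᵀ * U).mulVec x)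
    (hsym : Uᵀ * Y = Yᵀ * U) (hpsd : (Uᵀ * Y).PosSemidef) :
    σmin * frobSq (U - Y) ≤ frobSq ((U - Y) * Uᵀ) ∧
      frobSq ((U - Y) * Uᵀ) ≤
        (1 / (2 * (Real.sqrt 2 - 1))) * frobSq (U * Uᵀ - Y * Yᵀ) := by
  constructor
  · -- first inequality
    have key : ∀ x : Fin r → ℝ, x ⬝ᵥ (Uᵀ * U).mulVec x = ∑ j, ((U *ᵥ x) j) ^ 2 := by
      intro x
      rw [← Matrix.mulVec_mulVec, Matrix.dotProduct_mulVec, Matrix.vecMul_transpose]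
      simp [dotProduct, sq]
    have hfr : frobSq ((U - Y) * Uᵀ) = ∑ i, ∑ j, ((U *ᵥ ((U - Y) i)) j) ^ 2 := by
      simp [frobSq, Matrix.mul_apply, Matrix.mulVec, dotProduct,
        Matrix.transpose_apply, mul_comm]
    rw [hfr, frobSq, Finset.mul_sum]
    refine Finset.sum_le_sum fun i _ => ?_
    rw [← key ((U - Y) i)]
    exact hσ ((U - Y) i)
  · -- second inequality
    have hsqrt2 : (Real.sqrt 2) ^ 2 = 2 := Real.sq_sqrt (by norm_num)
    set s : ℝ := Real.sqrt 2 - 1 with hs_def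
    have hs_sq : s ^ 2 = 1 - 2 * s := by rw [hs_def]; nlinarith [hsqrt2]
    have hs_pos : 0 < s := by rw [hs_def]; nlinarith [Real.sqrt_nonneg 2, hsqrt2]
    have hs_lt : s < 1 := by rw [hs_def]; nlinarith [Real.sqrt_nonneg 2, hsqrt2]
    -- Δᵀ Δ
    have hΔΔ : (U - Y)ᵀ * (U - Y) = Uᵀ*U - 2 • (Uᵀ*Y) + Yᵀ*Y := by
      simp only [Matrix.transpose_sub, Matrix.sub_mul, Matrix.mul_sub]
      rw [← hsym, two_smul]
      abel
    -- h1
    have h1 : frobSq (U * Uᵀ - Y * Yᵀ) = ((Uᵀ*U)*(Uᵀ*U)).trace - 2*((Uᵀ*Y)*(Uᵀ*Y)).trace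
        + ((Yᵀ*Y)*(Yᵀ*Y)).trace := by
      have tUU := tr_conv U U U U
      have tUY := tr_conv U U Y Y
      have tYU := tr_conv Y Y U U
      rw [← hsym] at tUY tYU
      have tYY := tr_conv Y Y Y Y
      rw [frobSq_eq_trace]
      simp only [Matrix.transpose_sub, Matrix.transpose_mul, Matrix.transpose_transpose,
        Matrix.sub_mul, Matrix.mul_sub, Matrix.trace_sub]
      linear_combination tUU - tUY - tYU + tYY
    -- h2
    have h2 : frobSq ((U - Y) * Uᵀ) = ((Uᵀ*U)*(Uᵀ*U)).trace - 2*((Uᵀ*U)*(Uᵀ*Y)).trace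
        + ((Uᵀ*U)*(Yᵀ*Y)).trace := by
      rw [frobSq_eq_trace, Matrix.transpose_mul, Matrix.transpose_transpose, tr_conv, hΔΔ]
      have cGH := Matrix.trace_mul_comm (Uᵀ*Y) (Uᵀ*U)
      have cGK := Matrix.trace_mul_comm (Yᵀ*Y) (Uᵀ*U)
      simp only [Matrix.add_mul, Matrix.sub_mul, Matrix.smul_mul, Matrix.trace_add,
        Matrix.trace_sub, Matrix.trace_smul, smul_eq_mul]
      linear_combination (-2 : ℝ) * cGH + cGK
    -- h3
    have h3 : frobSq (s • (Uᵀ*U - Uᵀ*Y) - (Yᵀ*Y - Uᵀ*Y)) =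
        s^2*(((Uᵀ*U)*(Uᵀ*U)).trace - 2*((Uᵀ*U)*(Uᵀ*Y)).trace + ((Uᵀ*Y)*(Uᵀ*Y)).trace)
        - 2*s*(((Uᵀ*U)*(Yᵀ*Y)).trace - ((Uᵀ*U)*(Uᵀ*Y)).trace - ((Uᵀ*Y)*(Yᵀ*Y)).trace
          + ((Uᵀ*Y)*(Uᵀ*Y)).trace)
        + (((Yᵀ*Y)*(Yᵀ*Y)).trace - 2*((Uᵀ*Y)*(Yᵀ*Y)).trace + ((Uᵀ*Y)*(Uᵀ*Y)).trace) := by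
      rw [frobSq_eq_trace]
      have hT : (s • (Uᵀ*U - Uᵀ*Y) - (Yᵀ*Y - Uᵀ*Y))ᵀ = s • (Uᵀ*U - Uᵀ*Y) - (Yᵀ*Y - Uᵀ*Y) := by
        simp only [Matrix.transpose_sub, Matrix.transpose_smul, Matrix.transpose_mul,
          Matrix.transpose_transpose]
        rw [← hsym]
      rw [hT]
      have cHG := Matrix.trace_mul_comm (Uᵀ*Y) (Uᵀ*U)
      have cKG := Matrix.trace_mul_comm (Yᵀ*Y) (Uᵀ*U)
      have cKH := Matrix.trace_mul_comm (Yᵀ*Y) (Uᵀ*Y)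
      simp only [Matrix.sub_mul, Matrix.mul_sub, Matrix.smul_mul, Matrix.mul_smul,
        Matrix.trace_sub, Matrix.trace_smul, smul_eq_mul, smul_sub, smul_smul]
      linear_combination (s - s^2) * cHG + (-s) * cKG + (s - 1) * cKH
    -- h4
    have h4 : ((U - Y)ᵀ * (U - Y) * (Uᵀ*Y)).trace = ((Uᵀ*U)*(Uᵀ*Y)).trace
        - 2*((Uᵀ*Y)*(Uᵀ*Y)).trace + ((Uᵀ*Y)*(Yᵀ*Y)).trace := by
      rw [hΔΔ]
      have cKH := Matrix.trace_mul_comm (Yᵀ*Y) (Uᵀ*Y)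
      simp only [Matrix.add_mul, Matrix.sub_mul, Matrix.smul_mul, Matrix.trace_add,
        Matrix.trace_sub, Matrix.trace_smul, smul_eq_mul]
      linear_combination cKH
    -- nonnegativity
    have hF3 : 0 ≤ frobSq (s • (Uᵀ*U - Uᵀ*Y) - (Yᵀ*Y - Uᵀ*Y)) := frobSq_nonneg _
    have hPSDΔ : ((U - Y)ᵀ * (U - Y)).PosSemidef := by
      have := Matrix.posSemidef_conjTranspose_mul_self (U - Y)
      have hct : (U - Y)ᴴ = (U - Y)ᵀ := by ext i j; simp [Matrix.conjTranspose_apply]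
      rwa [hct] at this
    have hT4 : 0 ≤ ((U - Y)ᵀ * (U - Y) * (Uᵀ*Y)).trace :=
      trace_mul_nonneg_of_posSemidef hPSDΔ hpsd
    -- key identity
    have hId : frobSq (U * Uᵀ - Y * Yᵀ) = 2*s*frobSq ((U - Y) * Uᵀ)
        + frobSq (s • (Uᵀ*U - Uᵀ*Y) - (Yᵀ*Y - Uᵀ*Y))
        + (2 - 2*s) * ((U - Y)ᵀ * (U - Y) * (Uᵀ*Y)).trace := by
      linear_combination h1 - 2*s*h2 - h3 - (2 - 2*s)*h4
        - (((Uᵀ*U)*(Uᵀ*U)).trace - 2*((Uᵀ*U)*(Uᵀ*Y)).trace + ((Uᵀ*Y)*(Uᵀ*Y)).trace) * hs_sq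
    -- conclude
    have hmain : 2*s * frobSq ((U - Y) * Uᵀ) ≤ frobSq (U * Uᵀ - Y * Yᵀ) := by nlinarith
    have h2s : (0:ℝ) < 2*s := by linarith
    calc frobSq ((U - Y) * Uᵀ) = 1/(2*s) * (2*s * frobSq ((U - Y) * Uᵀ)) := by
          field_simp
      _ ≤ 1/(2*s) * frobSq (U * Uᵀ - Y * Yᵀ) := by
          apply mul_le_mul_of_nonneg_left hmain
          positivity
end
end

section
/- Let S be a d1×d2 real matrix such that each row has at most α·d2 nonzero entries and each column has at most α·d1 nonzero entries. Then the spectral norm satisfies ‖S‖ ≤ α·√(d1·d2)·‖S‖_∞. -/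
open Matrix BigOperators
open scoped Classical

noncomputable section

/-- Spectral (ℓ2 operator) norm of a real matrix. -/
def specNorm {m n : Type*} [Fintype m] [Fintype n] [DecidableEq n] (A : Matrix m n ℝ) : ℝ :=
  ‖LinearMap.toContinuousLinearMap (Matrix.toEuclideanLin A)‖

/-- If each row of `S` has at most `α·d2` nonzero entries and each column at most `α·d1`
nonzero entries, and all entries are bounded by `B` in absolute value (in particular
`B = ‖S‖_∞`), then `‖S‖ ≤ α·√(d1·d2)·B`. -/
theorem stmt3 {d1 d2 : ℕ} (S : Matrix (Fin d1) (Fin d2) ℝ) (α B : ℝ)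
    (hrow : ∀ i : Fin d1, ((Finset.univ.filter fun j : Fin d2 => S i j ≠ 0).card : ℝ) ≤ α * d2)
    (hcol : ∀ j : Fin d2, ((Finset.univ.filter fun i : Fin d1 => S i j ≠ 0).card : ℝ) ≤ α * d1)
    (hB : ∀ i j, |S i j| ≤ B) :
    specNorm S ≤ α * Real.sqrt (d1 * d2) * B := by
  rcases Nat.eq_zero_or_pos d1 with h1 | h1
  · subst h1
    have hz : specNorm S ≤ 0 := by
      apply ContinuousLinearMap.opNorm_le_bound _ le_rfl
      intro x
      have : (LinearMap.toContinuousLinearMap (Matrix.toEuclideanLin S)) x = 0 :=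
        Subsingleton.elim _ _
      simp [this]
    have : α * Real.sqrt ((0 : ℕ) * d2) * B = 0 := by simp
    linarith [hz, this.ge]
  rcases Nat.eq_zero_or_pos d2 with h2 | h2
  · subst h2
    have hz : specNorm S ≤ 0 := by
      apply ContinuousLinearMap.opNorm_le_bound _ le_rfl
      intro x
      have hx : x = 0 := Subsingleton.elim _ _
      simp [hx]
    have : α * Real.sqrt (d1 * (0 : ℕ)) * B = 0 := by simp
    linarith [hz, this.ge]
  -- main case
  have hB0 : 0 ≤ B := le_trans (abs_nonneg _) (hB ⟨0, h1⟩ ⟨0, h2⟩)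
  have hα0 : 0 ≤ α := by
    have := hrow ⟨0, h1⟩
    have hcard : (0 : ℝ) ≤ ((Finset.univ.filter fun j : Fin d2 => S ⟨0, h1⟩ j ≠ 0).card : ℝ) := by
      positivity
    have hd2 : (0:ℝ) < d2 := by exact_mod_cast h2
    nlinarith
  set R : ℝ := α * d2 * B with hR
  set C : ℝ := α * d1 * B with hC
  have hR0 : 0 ≤ R := by positivity
  have hC0 : 0 ≤ C := by positivity
  -- row sums bound
  have hrowsum : ∀ i, ∑ j, |S i j| ≤ R := by
    intro i
    have : ∑ j, |S i j| = ∑ j ∈ Finset.univ.filter fun j => S i j ≠ 0, |S i j| := by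
      rw [Finset.sum_filter_of_ne]
      intro j _ h
      intro hS; exact h (by simp [hS])
    rw [this]
    calc ∑ j ∈ Finset.univ.filter fun j => S i j ≠ 0, |S i j|
        ≤ ∑ _j ∈ Finset.univ.filter fun j => S i j ≠ 0, B :=
          Finset.sum_le_sum fun j _ => hB i j
      _ = ((Finset.univ.filter fun j => S i j ≠ 0).card : ℝ) * B := by
          rw [Finset.sum_const, nsmul_eq_mul]
      _ ≤ α * d2 * B := by
          exact mul_le_mul_of_nonneg_right (hrow i) hB0
  have hcolsum : ∀ j, ∑ i, |S i j| ≤ C := by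
    intro j
    have : ∑ i, |S i j| = ∑ i ∈ Finset.univ.filter fun i => S i j ≠ 0, |S i j| := by
      rw [Finset.sum_filter_of_ne]
      intro i _ h
      intro hS; exact h (by simp [hS])
    rw [this]
    calc ∑ i ∈ Finset.univ.filter fun i => S i j ≠ 0, |S i j|
        ≤ ∑ _i ∈ Finset.univ.filter fun i => S i j ≠ 0, B :=
          Finset.sum_le_sum fun i _ => hB i j
      _ = ((Finset.univ.filter fun i => S i j ≠ 0).card : ℝ) * B := by
          rw [Finset.sum_const, nsmul_eq_mul]
      _ ≤ α * d1 * B := by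
          exact mul_le_mul_of_nonneg_right (hcol j) hB0
  -- norm of the coefficient
  have hcoef : Real.sqrt (R * C) = α * Real.sqrt (d1 * d2) * B := by
    have : R * C = (α * Real.sqrt (d1 * d2) * B) ^ 2 := by
      have hs : Real.sqrt ((d1 : ℝ) * d2) ^ 2 = (d1 : ℝ) * d2 :=
        Real.sq_sqrt (by positivity)
      rw [hR, hC]; linear_combination (-(α^2*B^2)) * hs
    rw [this, Real.sqrt_sq (by positivity)]
  rw [← hcoef]
  apply ContinuousLinearMap.opNorm_le_bound _ (Real.sqrt_nonneg _)
  intro x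
  have hkey : ∑ i, (∑ j, S i j * x j) ^ 2 ≤ R * C * ∑ j, (x j) ^ 2 := by
    have step1 : ∀ i, (∑ j, S i j * x j) ^ 2 ≤ (∑ j, |S i j|) * ∑ j, |S i j| * (x j) ^ 2 := by
      intro i
      apply Finset.sum_sq_le_sum_mul_sum_of_sq_eq_mul
      · intro j _; exact abs_nonneg _
      · intro j _; positivity
      · intro j _
        rw [mul_pow, ← sq_abs (S i j)]
        ring
    calc ∑ i, (∑ j, S i j * x j) ^ 2
        ≤ ∑ i, R * ∑ j, |S i j| * (x j) ^ 2 := by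
          apply Finset.sum_le_sum
          intro i _
          refine le_trans (step1 i) ?_
          apply mul_le_mul_of_nonneg_right (hrowsum i)
          positivity
      _ = R * ∑ j, (∑ i, |S i j|) * (x j) ^ 2 := by
          rw [← Finset.mul_sum, Finset.sum_comm]
          congr 1
          apply Finset.sum_congr rfl
          intro j _
          rw [Finset.sum_mul]
      _ ≤ R * ∑ j, C * (x j) ^ 2 := by
          apply mul_le_mul_of_nonneg_left _ hR0
          apply Finset.sum_le_sum
          intro j _
          exact mul_le_mul_of_nonneg_right (hcolsum j) (sq_nonneg _)
      _ = R * C * ∑ j, (x j) ^ 2 := by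
          rw [← Finset.mul_sum]; ring
  have hnorm_x : ‖x‖ ^ 2 = ∑ j, (x j) ^ 2 := by
    rw [EuclideanSpace.norm_eq]
    rw [Real.sq_sqrt (by positivity)]
    apply Finset.sum_congr rfl
    intro j _
    rw [Real.norm_eq_abs, sq_abs]
  have happ : (LinearMap.toContinuousLinearMap (Matrix.toEuclideanLin S)) x =
      (WithLp.equiv 2 (Fin d1 → ℝ)).symm (S *ᵥ (WithLp.equiv 2 (Fin d2 → ℝ)) x) := by
    simp [Matrix.toEuclideanLin_apply]
  have hnorm_Sx : ‖(LinearMap.toContinuousLinearMap (Matrix.toEuclideanLin S)) x‖ ^ 2 =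
      ∑ i, (∑ j, S i j * x j) ^ 2 := by
    rw [happ, EuclideanSpace.norm_eq, Real.sq_sqrt (by positivity)]
    apply Finset.sum_congr rfl
    intro i _
    rw [Real.norm_eq_abs, sq_abs]
    rfl
  have h1' : ‖(LinearMap.toContinuousLinearMap (Matrix.toEuclideanLin S)) x‖ ^ 2 ≤
      (Real.sqrt (R * C) * ‖x‖) ^ 2 := by
    rw [hnorm_Sx, mul_pow, Real.sq_sqrt (by positivity), hnorm_x]
    exact hkey
  exact (pow_le_pow_iff_left₀ (norm_nonneg _) (by positivity) two_ne_zero).mp h1'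
end
end

section
/- Let M1, M2 be d1×d2 real matrices with singular value decompositions M1 = U1 D1 V1^T and M2 = U2 D2 V2^T. Then ‖U1 D1 U1^T − U2 D2 U2^T‖_F² + ‖V1 D1 V1^T − V2 D2 V2^T‖_F² ≤ 2‖M1 − M2‖_F². -/
open Matrix BigOperators

noncomputable section

/-- Trace of `Xᵀ * Y` as an entrywise sum (Frobenius inner product). -/
lemma tr_entry {a b : ℕ} (X Y : Matrix (Fin a) (Fin b) ℝ) :
    Matrix.trace (Xᵀ * Y) = ∑ i, ∑ j, X i j * Y i j := by
  simp [Matrix.trace, Matrix.diag, Matrix.mul_apply]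
  exact Finset.sum_comm

/-- Key trace identity for SVD-shaped products. -/
lemma tr_svd {a b k : ℕ} (A C : Matrix (Fin a) (Fin k) ℝ) (B F : Matrix (Fin b) (Fin k) ℝ)
    (D E : Fin k → ℝ) :
    Matrix.trace ((A * Matrix.diagonal D * Bᵀ)ᵀ * (C * Matrix.diagonal E * Fᵀ)) =
      ∑ i, ∑ j, D i * E j * ((Aᵀ * C) i j) * ((Bᵀ * F) i j) := by
  have h1 : (A * Matrix.diagonal D * Bᵀ)ᵀ = B * Matrix.diagonal D * Aᵀ := by
    simp [Matrix.transpose_mul, Matrix.diagonal_transpose, Matrix.mul_assoc]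
  rw [h1]
  have h2 : B * Matrix.diagonal D * Aᵀ * (C * Matrix.diagonal E * Fᵀ)
      = B * (Matrix.diagonal D * (Aᵀ * C) * Matrix.diagonal E * Fᵀ) := by
    simp only [Matrix.mul_assoc]
  rw [h2, Matrix.trace_mul_comm]
  have h3 : Matrix.diagonal D * (Aᵀ * C) * Matrix.diagonal E * Fᵀ * B
      = Matrix.diagonal D * (Aᵀ * C) * Matrix.diagonal E * (Fᵀ * B) := by
    simp only [Matrix.mul_assoc]
  rw [h3]
  have h4 : Matrix.trace (Matrix.diagonal D * (Aᵀ * C) * Matrix.diagonal E * (Fᵀ * B))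
      = ∑ i, ∑ j, (Matrix.diagonal D * (Aᵀ * C) * Matrix.diagonal E) i j * (Fᵀ * B) j i := by
    simp [Matrix.trace, Matrix.diag, Matrix.mul_apply]
  rw [h4]
  refine Finset.sum_congr rfl fun i _ => Finset.sum_congr rfl fun j _ => ?_
  rw [Matrix.mul_diagonal, Matrix.diagonal_mul]
  have : (Fᵀ * B) j i = (Bᵀ * F) i j := by
    simp [Matrix.mul_apply, mul_comm]
  rw [this]; ring

/-- Expanding the squared Frobenius norm of a difference via traces. -/
lemma frobSq_sub {a b : ℕ} (X Y : Matrix (Fin a) (Fin b) ℝ) :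
    frobSq (X - Y) = Matrix.trace (Xᵀ * X) + Matrix.trace (Yᵀ * Y)
      - 2 * Matrix.trace (Xᵀ * Y) := by
  rw [tr_entry, tr_entry, tr_entry, frobSq]
  simp only [Finset.mul_sum]
  rw [← Finset.sum_add_distrib, ← Finset.sum_sub_distrib]
  refine Finset.sum_congr rfl fun i _ => ?_
  rw [← Finset.sum_add_distrib, ← Finset.sum_sub_distrib]
  refine Finset.sum_congr rfl fun j _ => ?_
  simp [Matrix.sub_apply]; ring

/-- If `M1 = U1 D1 V1ᵀ` and `M2 = U2 D2 V2ᵀ` are SVDs (orthonormal columns, nonnegative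
diagonal), then `‖U1 D1 U1ᵀ − U2 D2 U2ᵀ‖_F² + ‖V1 D1 V1ᵀ − V2 D2 V2ᵀ‖_F² ≤ 2‖M1 − M2‖_F²`. -/
theorem stmt4 {d1 d2 k : ℕ}
    (U1 U2 : Matrix (Fin d1) (Fin k) ℝ) (V1 V2 : Matrix (Fin d2) (Fin k) ℝ)
    (D1 D2 : Fin k → ℝ)
    (hU1 : U1ᵀ * U1 = 1) (hU2 : U2ᵀ * U2 = 1)
    (hV1 : V1ᵀ * V1 = 1) (hV2 : V2ᵀ * V2 = 1)
    (hD1 : ∀ i, 0 ≤ D1 i) (hD2 : ∀ i, 0 ≤ D2 i) :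
    frobSq (U1 * Matrix.diagonal D1 * U1ᵀ - U2 * Matrix.diagonal D2 * U2ᵀ) +
        frobSq (V1 * Matrix.diagonal D1 * V1ᵀ - V2 * Matrix.diagonal D2 * V2ᵀ) ≤
      2 * frobSq (U1 * Matrix.diagonal D1 * V1ᵀ - U2 * Matrix.diagonal D2 * V2ᵀ) := by
  rw [frobSq_sub, frobSq_sub, frobSq_sub,
    tr_svd, tr_svd, tr_svd, tr_svd, tr_svd, tr_svd, tr_svd, tr_svd, tr_svd,
    hU1, hU2, hV1, hV2]
  simp only [Matrix.one_apply, mul_ite, ite_mul, mul_one, mul_zero, one_mul, zero_mul,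
    Finset.sum_ite_eq, Finset.mem_univ, if_true]
  set P := U1ᵀ * U2 with hP
  set Q := V1ᵀ * V2 with hQ
  have key : 0 ≤ ∑ i, ∑ j, D1 i * D2 j * (P i j - Q i j) ^ 2 :=
    Finset.sum_nonneg fun i _ => Finset.sum_nonneg fun j _ =>
      mul_nonneg (mul_nonneg (hD1 i) (hD2 j)) (sq_nonneg _)
  have expand : ∑ i, ∑ j, D1 i * D2 j * (P i j - Q i j) ^ 2
      = (∑ i, ∑ j, D1 i * D2 j * P i j * P i j)
        + (∑ i, ∑ j, D1 i * D2 j * Q i j * Q i j)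
        - 2 * ∑ i, ∑ j, D1 i * D2 j * P i j * Q i j := by
    simp only [Finset.mul_sum]
    rw [← Finset.sum_add_distrib, ← Finset.sum_sub_distrib]
    refine Finset.sum_congr rfl fun i _ => ?_
    rw [← Finset.sum_add_distrib, ← Finset.sum_sub_distrib]
    exact Finset.sum_congr rfl fun j _ => by ring
  linarith [key, expand.symm.le]
end
end

section
/- Let Ω ⊆ [d1]×[d2] and let M* = U* (V*)^T with U* ∈ ℝ^{d1×r}, V* ∈ ℝ^{d2×r}, where max_i ‖e_i^T U*‖² ≤ μr‖M*‖/d1 and max_j ‖e_j^T V*‖² ≤ μr‖M*‖/d2. Suppose each row and column of the indicator of Ω has at most an α fraction of entries. Let U ∈ ℝ^{d1×r}, V ∈ ℝ^{d2×r} satisfy max_i ‖e_i^T U‖² ≤ μr‖M*‖/d1 and max_j ‖e_j^T V‖² ≤ μr‖M*‖/d2, and set M = UV^T, Δ_U = U − U*, Δ_V = V − V*. Then Σ_{(i,j)∈Ω} (M − M*)_{ij}² ≤ 4·α·μr·‖M*‖·(‖Δ_U‖_F² + ‖Δ_V‖_F²). -/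
open Matrix BigOperators
open scoped Classical

noncomputable section

/-- If `M* = U*(V*)ᵀ` and `M = UVᵀ` are incoherent (all rows of `U, U*` bounded by
`√(μr‖M*‖/d1)` and rows of `V, V*` by `√(μr‖M*‖/d2)`), and `Ω` has at most an `α`
fraction of entries in each row/column, then
`Σ_{(i,j)∈Ω} (M − M*)_{ij}² ≤ 4αμr‖M*‖(‖Δ_U‖_F² + ‖Δ_V‖_F²)`. -/
theorem stmt7 {d1 d2 r : ℕ} (Ω : Finset (Fin d1 × Fin d2))
    (U Ustar : Matrix (Fin d1) (Fin r) ℝ) (V Vstar : Matrix (Fin d2) (Fin r) ℝ)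
    (μ α : ℝ)
    (hUstar : ∀ i, (∑ k, (Ustar i k) ^ 2) ≤ μ * r * specNorm (Ustar * Vstarᵀ) / d1)
    (hVstar : ∀ j, (∑ k, (Vstar j k) ^ 2) ≤ μ * r * specNorm (Ustar * Vstarᵀ) / d2)
    (hU : ∀ i, (∑ k, (U i k) ^ 2) ≤ μ * r * specNorm (Ustar * Vstarᵀ) / d1)
    (hV : ∀ j, (∑ k, (V j k) ^ 2) ≤ μ * r * specNorm (Ustar * Vstarᵀ) / d2)
    (hrow : ∀ i : Fin d1, ((Ω.filter fun p => p.1 = i).card : ℝ) ≤ α * d2)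
    (hcol : ∀ j : Fin d2, ((Ω.filter fun p => p.2 = j).card : ℝ) ≤ α * d1) :
    ∑ p ∈ Ω, ((U * Vᵀ - Ustar * Vstarᵀ) p.1 p.2) ^ 2 ≤
      4 * α * (μ * r) * specNorm (Ustar * Vstarᵀ) *
        (frobSq (U - Ustar) + frobSq (V - Vstar)) := by
  by_cases hd1 : d1 = 0
  · subst hd1
    have hΩ : Ω = ∅ := Finset.eq_empty_of_forall_notMem fun p _ => p.1.elim0
    have hz : specNorm (Ustar * Vstarᵀ) = 0 := by
      unfold specNorm
      rw [show Matrix.toEuclideanLin (Ustar * Vstarᵀ) = 0 from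
        LinearMap.ext fun x => by ext i; exact Fin.elim0 i]
      simp
    rw [hΩ, hz]
    simp
  by_cases hd2 : d2 = 0
  · subst hd2
    have hΩ : Ω = ∅ := Finset.eq_empty_of_forall_notMem fun p _ => p.2.elim0
    have hz : specNorm (Ustar * Vstarᵀ) = 0 := by
      unfold specNorm
      rw [show Matrix.toEuclideanLin (Ustar * Vstarᵀ) = 0 from
        LinearMap.ext fun x => by
          rw [show x = 0 from by ext i; exact Fin.elim0 i]; simp]
      simp
    rw [hΩ, hz]
    simp
  -- main case
  have hd1p : (0:ℝ) < d1 := by exact_mod_cast Nat.pos_of_ne_zero hd1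
  have hd2p : (0:ℝ) < d2 := by exact_mod_cast Nat.pos_of_ne_zero hd2
  set E := μ * ↑r * specNorm (Ustar * Vstarᵀ) with hE
  obtain ⟨i0⟩ : Nonempty (Fin d1) := ⟨⟨0, Nat.pos_of_ne_zero hd1⟩⟩
  obtain ⟨j0⟩ : Nonempty (Fin d2) := ⟨⟨0, Nat.pos_of_ne_zero hd2⟩⟩
  have hα : 0 ≤ α := by
    have h1 : (0:ℝ) ≤ ((Ω.filter fun p => p.1 = i0).card : ℝ) := Nat.cast_nonneg _
    nlinarith [hrow i0]
  have hEnn : 0 ≤ E := by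
    have h1 : (0:ℝ) ≤ ∑ k, (Ustar i0 k) ^ 2 :=
      Finset.sum_nonneg fun k _ => sq_nonneg _
    have h2 := (le_div_iff₀ hd1p).mp (h1.trans (hUstar i0))
    linarith
  set A : Fin d1 → ℝ := fun i => ∑ k, (U i k - Ustar i k) ^ 2 with hA
  set B : Fin d2 → ℝ := fun j => ∑ k, (V j k - Vstar j k) ^ 2 with hB
  have hAnn : ∀ i, 0 ≤ A i := fun i => Finset.sum_nonneg fun k _ => sq_nonneg _
  have hBnn : ∀ j, 0 ≤ B j := fun j => Finset.sum_nonneg fun k _ => sq_nonneg _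
  have hpt : ∀ p : Fin d1 × Fin d2, ((U * Vᵀ - Ustar * Vstarᵀ) p.1 p.2) ^ 2
      ≤ 2 * (E / d2) * A p.1 + 2 * (E / d1) * B p.2 := by
    rintro ⟨i, j⟩
    have hdecomp : (U * Vᵀ - Ustar * Vstarᵀ) i j
        = (∑ k, (U i k - Ustar i k) * V j k) + ∑ k, Ustar i k * (V j k - Vstar j k) := by
      simp only [Matrix.sub_apply, Matrix.mul_apply, Matrix.transpose_apply,
        ← Finset.sum_add_distrib]
      rw [← Finset.sum_sub_distrib]
      exact Finset.sum_congr rfl fun k _ => by ring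
    have ha : (∑ k, (U i k - Ustar i k) * V j k) ^ 2 ≤ A i * (E / d2) := by
      have hcs := Finset.sum_mul_sq_le_sq_mul_sq Finset.univ
        (fun k => U i k - Ustar i k) (fun k => V j k)
      have hv := hV j
      nlinarith [hAnn i]
    have hb : (∑ k, Ustar i k * (V j k - Vstar j k)) ^ 2 ≤ (E / d1) * B j := by
      have hcs := Finset.sum_mul_sq_le_sq_mul_sq Finset.univ
        (fun k => Ustar i k) (fun k => V j k - Vstar j k)
      have hu := hUstar i
      nlinarith [hBnn j]
    rw [hdecomp]
    nlinarith [sq_nonneg ((∑ k, (U i k - Ustar i k) * V j k)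
      - ∑ k, Ustar i k * (V j k - Vstar j k))]
  have hsum1 : ∑ p ∈ Ω, A p.1 ≤ α * d2 * ∑ i, A i := by
    calc ∑ p ∈ Ω, A p.1
        = ∑ i : Fin d1, ∑ p ∈ Ω.filter fun p => p.1 = i, A p.1 :=
          (Finset.sum_fiberwise Ω (fun p => p.1) fun p => A p.1).symm
      _ = ∑ i : Fin d1, ((Ω.filter fun p => p.1 = i).card : ℝ) * A i := by
          refine Finset.sum_congr rfl fun i _ => ?_
          rw [Finset.sum_congr rfl fun p hp =>
            congrArg A (Finset.mem_filter.mp hp).2]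
          simp [nsmul_eq_mul]
      _ ≤ ∑ i : Fin d1, α * d2 * A i :=
          Finset.sum_le_sum fun i _ => mul_le_mul_of_nonneg_right (hrow i) (hAnn i)
      _ = α * d2 * ∑ i, A i := (Finset.mul_sum _ _ _).symm
  have hsum2 : ∑ p ∈ Ω, B p.2 ≤ α * d1 * ∑ j, B j := by
    calc ∑ p ∈ Ω, B p.2
        = ∑ j : Fin d2, ∑ p ∈ Ω.filter fun p => p.2 = j, B p.2 :=
          (Finset.sum_fiberwise Ω (fun p => p.2) fun p => B p.2).symm
      _ = ∑ j : Fin d2, ((Ω.filter fun p => p.2 = j).card : ℝ) * B j := by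
          refine Finset.sum_congr rfl fun j _ => ?_
          rw [Finset.sum_congr rfl fun p hp =>
            congrArg B (Finset.mem_filter.mp hp).2]
          simp [nsmul_eq_mul]
      _ ≤ ∑ j : Fin d2, α * d1 * B j :=
          Finset.sum_le_sum fun j _ => mul_le_mul_of_nonneg_right (hcol j) (hBnn j)
      _ = α * d1 * ∑ j, B j := (Finset.mul_sum _ _ _).symm
  have hF1 : frobSq (U - Ustar) = ∑ i, A i := by
    simp [frobSq, hA, Matrix.sub_apply]
  have hF2 : frobSq (V - Vstar) = ∑ j, B j := by
    simp [frobSq, hB, Matrix.sub_apply]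
  have hgoalE : 4 * α * (μ * ↑r) * specNorm (Ustar * Vstarᵀ)
      * (frobSq (U - Ustar) + frobSq (V - Vstar))
      = 4 * α * E * ((∑ i, A i) + ∑ j, B j) := by
    rw [hF1, hF2, hE]; ring
  rw [hgoalE]
  have hsA : 0 ≤ ∑ i, A i := Finset.sum_nonneg fun i _ => hAnn i
  have hsB : 0 ≤ ∑ j, B j := Finset.sum_nonneg fun j _ => hBnn j
  calc ∑ p ∈ Ω, ((U * Vᵀ - Ustar * Vstarᵀ) p.1 p.2) ^ 2
      ≤ ∑ p ∈ Ω, (2 * (E / d2) * A p.1 + 2 * (E / d1) * B p.2) :=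
        Finset.sum_le_sum fun p _ => hpt p
    _ = 2 * (E / d2) * (∑ p ∈ Ω, A p.1) + 2 * (E / d1) * (∑ p ∈ Ω, B p.2) := by
        rw [Finset.sum_add_distrib, ← Finset.mul_sum, ← Finset.mul_sum]
    _ ≤ 2 * (E / d2) * (α * d2 * ∑ i, A i) + 2 * (E / d1) * (α * d1 * ∑ j, B j) := by
        have h2 : 0 ≤ 2 * (E / d2) := by positivity
        have h3 : 0 ≤ 2 * (E / d1) := by positivity
        exact add_le_add (mul_le_mul_of_nonneg_left hsum1 h2)
          (mul_le_mul_of_nonneg_left hsum2 h3)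
    _ = 2 * α * E * ((∑ i, A i) + ∑ j, B j) := by
        field_simp
    _ ≤ 4 * α * E * ((∑ i, A i) + ∑ j, B j) := by
        nlinarith [mul_nonneg (mul_nonneg hα hEnn) (add_nonneg hsA hsB)]
end
end

section
/- Let f(U) = (1/2)(UU^T − M*) : H : (UU^T − M*) + Q(U), where H is a symmetric bilinear form on symmetric d×d matrices, M* = U*(U*)^T, and Q is twice differentiable. Let Δ = U − U*R for an orthogonal R, and M = UU^T. Then the Hessian quadratic form satisfies: Δ : ∇²f(U) : Δ = ΔΔ^T : H : ΔΔ^T − 3(M − M*) : H : (M − M*) + 4⟨∇f(U), Δ⟩ + [Δ : ∇²Q(U) : Δ − 4⟨∇Q(U), Δ⟩]. -/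
open Matrix BigOperators

noncomputable section

attribute [local instance] Matrix.normedAddCommGroup Matrix.normedSpace

namespace Stmt9Aux

/-- Upgrade a bilinear map between finite-dimensional normed spaces to a continuous
bilinear map. -/
noncomputable def clm₂ {E F G : Type*} [NormedAddCommGroup E] [NormedSpace ℝ E]
    [FiniteDimensional ℝ E] [NormedAddCommGroup F] [NormedSpace ℝ F] [FiniteDimensional ℝ F]
    [NormedAddCommGroup G] [NormedSpace ℝ G]
    (B : E →ₗ[ℝ] F →ₗ[ℝ] G) : E →L[ℝ] F →L[ℝ] G :=
  LinearMap.toContinuousLinearMap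
    (((LinearMap.toContinuousLinearMap :
        (F →ₗ[ℝ] G) ≃ₗ[ℝ] (F →L[ℝ] G)) : (F →ₗ[ℝ] G) →ₗ[ℝ] (F →L[ℝ] G)).comp B)

@[simp] lemma clm₂_apply {E F G : Type*} [NormedAddCommGroup E] [NormedSpace ℝ E]
    [FiniteDimensional ℝ E] [NormedAddCommGroup F] [NormedSpace ℝ F] [FiniteDimensional ℝ F]
    [NormedAddCommGroup G] [NormedSpace ℝ G]
    (B : E →ₗ[ℝ] F →ₗ[ℝ] G) (x : E) (y : F) : clm₂ B x y = B x y := rfl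

variable {d r : ℕ}

/-- Matrix multiplication `Matrix (Fin d) (Fin r) × Matrix (Fin r) (Fin d) → Matrix d d`
as a bilinear map. -/
def mulL : Matrix (Fin d) (Fin r) ℝ →ₗ[ℝ] Matrix (Fin r) (Fin d) ℝ →ₗ[ℝ]
    Matrix (Fin d) (Fin d) ℝ :=
  LinearMap.mk₂ ℝ (· * ·) Matrix.add_mul Matrix.smul_mul Matrix.mul_add (fun c m n => Matrix.mul_smul m c n)

/-- The bilinear map `(W, X) ↦ W Xᵀ + X Wᵀ`. -/
def TL : Matrix (Fin d) (Fin r) ℝ →ₗ[ℝ] Matrix (Fin d) (Fin r) ℝ →ₗ[ℝ]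
    Matrix (Fin d) (Fin d) ℝ :=
  LinearMap.mk₂ ℝ (fun W X => W * Xᵀ + X * Wᵀ)
    (by intro m₁ m₂ n; simp [Matrix.add_mul, Matrix.mul_add, Matrix.transpose_add]; abel)
    (by intro c m n; simp [Matrix.smul_mul, Matrix.mul_smul, Matrix.transpose_smul, smul_add])
    (by intro m n₁ n₂; simp [Matrix.add_mul, Matrix.mul_add, Matrix.transpose_add]; abel)
    (by intro c m n; simp [Matrix.smul_mul, Matrix.mul_smul, Matrix.transpose_smul, smul_add])

/-- Continuous version of `TL`. -/
noncomputable def Tc : Matrix (Fin d) (Fin r) ℝ →L[ℝ] Matrix (Fin d) (Fin r) ℝ →L[ℝ]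
    Matrix (Fin d) (Fin d) ℝ := clm₂ TL

@[simp] lemma Tc_apply (W X : Matrix (Fin d) (Fin r) ℝ) :
    Tc W X = W * Xᵀ + X * Wᵀ := rfl

/-- Transpose as a continuous linear map. -/
noncomputable def trC : Matrix (Fin d) (Fin r) ℝ →L[ℝ] Matrix (Fin r) (Fin d) ℝ :=
  LinearMap.toContinuousLinearMap
    ((Matrix.transposeLinearEquiv (Fin d) (Fin r) ℝ ℝ :
      Matrix (Fin d) (Fin r) ℝ ≃ₗ[ℝ] Matrix (Fin r) (Fin d) ℝ) :
      Matrix (Fin d) (Fin r) ℝ →ₗ[ℝ] Matrix (Fin r) (Fin d) ℝ)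

@[simp] lemma trC_apply (W : Matrix (Fin d) (Fin r) ℝ) : trC W = Wᵀ := rfl

/-- The quadratic map `W ↦ W Wᵀ − C` has derivative `Tc W` at `W`. -/
lemma hasFDerivAt_psi (C : Matrix (Fin d) (Fin d) ℝ) (W : Matrix (Fin d) (Fin r) ℝ) :
    HasFDerivAt (fun W : Matrix (Fin d) (Fin r) ℝ => W * Wᵀ - C) (Tc W) W := by
  have h1 : HasFDerivAt (fun W : Matrix (Fin d) (Fin r) ℝ => (clm₂ mulL) W (trC W))
      ((clm₂ (mulL (d := d) (r := r))).precompR _ W trC +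
        (clm₂ mulL).precompL _ (ContinuousLinearMap.id ℝ _) (trC W)) W :=
    ContinuousLinearMap.hasFDerivAt_of_bilinear _ (hasFDerivAt_id W) (trC.hasFDerivAt)
  have h2 : ((clm₂ (mulL (d := d) (r := r))).precompR _ W trC +
      (clm₂ mulL).precompL _ (ContinuousLinearMap.id ℝ _) (trC W)) = Tc W := by
    ext X
    simp [ContinuousLinearMap.precompR, ContinuousLinearMap.precompL, mulL, Tc, TL]
    rfl
  have h3 : HasFDerivAt (fun W : Matrix (Fin d) (Fin r) ℝ => (clm₂ mulL) W (trC W))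
      (Tc W) W := h2 ▸ h1
  have h4 := h3.sub_const C
  exact h4

/-- Derivative of the quadratic form `A ↦ (1/2) Hf A A` for symmetric `Hf`. -/
lemma hasFDerivAt_quad (Hf : Matrix (Fin d) (Fin d) ℝ →ₗ[ℝ] Matrix (Fin d) (Fin d) ℝ →ₗ[ℝ] ℝ)
    (hHsymm : ∀ X Y, Hf X Y = Hf Y X) (A : Matrix (Fin d) (Fin d) ℝ) :
    HasFDerivAt (fun A : Matrix (Fin d) (Fin d) ℝ => (1 / 2 : ℝ) * Hf A A)
      (clm₂ Hf A) A := by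
  have h1 : HasFDerivAt (fun A : Matrix (Fin d) (Fin d) ℝ => (clm₂ Hf) A A)
      ((clm₂ Hf).precompR _ A (ContinuousLinearMap.id ℝ _) +
        (clm₂ Hf).precompL _ (ContinuousLinearMap.id ℝ _) A) A :=
    ContinuousLinearMap.hasFDerivAt_of_bilinear _ (hasFDerivAt_id A) (hasFDerivAt_id A)
  have h2 := h1.const_mul (1 / 2 : ℝ)
  have h3 : (1 / 2 : ℝ) • ((clm₂ Hf).precompR _ A (ContinuousLinearMap.id ℝ _) +
      (clm₂ Hf).precompL _ (ContinuousLinearMap.id ℝ _) A) = clm₂ Hf A := by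
    ext X
    simp only [ContinuousLinearMap.coe_smul', Pi.smul_apply, ContinuousLinearMap.add_apply,
      ContinuousLinearMap.precompR, ContinuousLinearMap.precompL,
      ContinuousLinearMap.coe_comp', Function.comp_apply, ContinuousLinearMap.flip_apply,
      ContinuousLinearMap.compL_apply, ContinuousLinearMap.coe_id', id_eq,
      clm₂_apply, smul_eq_mul]
    rw [hHsymm X A]
    ring
  exact h3 ▸ h2

end Stmt9Aux

open Stmt9Aux

/-- Operator-norm instances on spaces of continuous linear maps out of matrices. -/
@[reducible] def clmNACG {d r : ℕ} : NormedAddCommGroup (Matrix (Fin d) (Fin r) ℝ →L[ℝ] ℝ) :=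
  ContinuousLinearMap.toNormedAddCommGroup

attribute [local instance] clmNACG

@[reducible] def clmNS {d r : ℕ} : NormedSpace ℝ (Matrix (Fin d) (Fin r) ℝ →L[ℝ] ℝ) :=
  ContinuousLinearMap.toNormedSpace

attribute [local instance] clmNS

@[reducible] def clm2NACG {d r : ℕ} :
    NormedAddCommGroup (Matrix (Fin d) (Fin r) ℝ →L[ℝ] Matrix (Fin d) (Fin r) ℝ →L[ℝ] ℝ) :=
  ContinuousLinearMap.toNormedAddCommGroup

attribute [local instance] clm2NACG

set_option maxHeartbeats 1000000 in
/-- The key Hessian identity (Lemma "main"): for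
`f(U) = (1/2)(UUᵀ − M*) : H : (UUᵀ − M*) + Q(U)` with `H` a symmetric bilinear form,
`M* = U*(U*)ᵀ`, `Q` twice differentiable, `R` orthogonal and `Δ = U − U*R`:
`Δ:∇²f(U):Δ = ΔΔᵀ:H:ΔΔᵀ − 3(M−M*):H:(M−M*) + 4⟨∇f(U),Δ⟩ + [Δ:∇²Q(U):Δ − 4⟨∇Q(U),Δ⟩]`. -/
theorem stmt9 {d r : ℕ}
    (Hf : Matrix (Fin d) (Fin d) ℝ →ₗ[ℝ] Matrix (Fin d) (Fin d) ℝ →ₗ[ℝ] ℝ)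
    (hHsymm : ∀ X Y, Hf X Y = Hf Y X)
    (Q : Matrix (Fin d) (Fin r) ℝ → ℝ) (hQ : ContDiff ℝ 2 Q)
    (Ustar U : Matrix (Fin d) (Fin r) ℝ) (R : Matrix (Fin r) (Fin r) ℝ)
    (hR : R ∈ Matrix.orthogonalGroup (Fin r) ℝ)
    (f : Matrix (Fin d) (Fin r) ℝ → ℝ)
    (hf : f = fun W =>
      (1 / 2) * Hf (W * Wᵀ - Ustar * Ustarᵀ) (W * Wᵀ - Ustar * Ustarᵀ) + Q W) :
    iteratedFDeriv ℝ 2 f U ![U - Ustar * R, U - Ustar * R] =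
      Hf ((U - Ustar * R) * (U - Ustar * R)ᵀ) ((U - Ustar * R) * (U - Ustar * R)ᵀ) -
        3 * Hf (U * Uᵀ - Ustar * Ustarᵀ) (U * Uᵀ - Ustar * Ustarᵀ) +
        4 * fderiv ℝ f U (U - Ustar * R) +
        (iteratedFDeriv ℝ 2 Q U ![U - Ustar * R, U - Ustar * R] -
          4 * fderiv ℝ Q U (U - Ustar * R)) := by
  classical
  set Δ := U - Ustar * R with hΔ
  set C := Ustar * Ustarᵀ with hC
  set ψ : Matrix (Fin d) (Fin r) ℝ → Matrix (Fin d) (Fin d) ℝ :=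
    fun W => W * Wᵀ - C with hψdef
  -- orthogonality
  have hRR : R * Rᵀ = (1 : Matrix (Fin r) (Fin r) ℝ) := by
    have h := (Matrix.mem_orthogonalGroup_iff (Fin r) ℝ).mp hR
    simpa [Matrix.star_eq_conjTranspose, Matrix.conjTranspose] using h
  have hMstar : (Ustar * R) * (Ustar * R)ᵀ = Ustar * Ustarᵀ := by
    rw [Matrix.transpose_mul,
      show Ustar * R * (Rᵀ * Ustarᵀ) = Ustar * (R * Rᵀ) * Ustarᵀ by
        simp [Matrix.mul_assoc],
      hRR, Matrix.mul_one]
  have hkey : U * Δᵀ + Δ * Uᵀ = ψ U + Δ * Δᵀ := by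
    simp only [hΔ, hψdef, hC, Matrix.mul_sub, Matrix.sub_mul, Matrix.transpose_sub]
    rw [← hMstar]
    abel
  -- first derivative of the quadratic part
  have hg : ∀ W, HasFDerivAt (fun W => (1 / 2 : ℝ) * Hf (ψ W) (ψ W))
      ((clm₂ Hf (ψ W)).comp (Tc W)) W := by
    intro W
    exact (hasFDerivAt_quad Hf hHsymm (ψ W)).comp W (hasFDerivAt_psi C W)
  have hQd : Differentiable ℝ Q := hQ.differentiable (by norm_num)
  have hfd : HasFDerivAt f ((clm₂ Hf (ψ U)).comp (Tc U) + fderiv ℝ Q U) U := by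
    rw [hf]
    exact (hg U).add (hQd U).hasFDerivAt
  have hfderiv : fderiv ℝ f U Δ = Hf (ψ U) (U * Δᵀ + Δ * Uᵀ) + fderiv ℝ Q U Δ := by
    rw [hfd.fderiv]
    simp
    exact map_add (Hf (ψ U)) _ _
  -- second derivative of the quadratic part
  have h1 : HasFDerivAt (fun W => clm₂ Hf (ψ W)) ((clm₂ Hf).comp (Tc U)) U :=
    (clm₂ Hf).hasFDerivAt.comp U (hasFDerivAt_psi C U)
  have hG2 : HasFDerivAt
      (fun W => (ContinuousLinearMap.compL ℝ (Matrix (Fin d) (Fin r) ℝ)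
          (Matrix (Fin d) (Fin d) ℝ) ℝ) (clm₂ Hf (ψ W)) (Tc W))
      ((ContinuousLinearMap.compL ℝ (Matrix (Fin d) (Fin r) ℝ)
          (Matrix (Fin d) (Fin d) ℝ) ℝ).precompR _ (clm₂ Hf (ψ U)) Tc +
        (ContinuousLinearMap.compL ℝ (Matrix (Fin d) (Fin r) ℝ)
          (Matrix (Fin d) (Fin d) ℝ) ℝ).precompL _ ((clm₂ Hf).comp (Tc U)) (Tc U)) U :=
    ContinuousLinearMap.hasFDerivAt_of_bilinear _ h1 Tc.hasFDerivAt
  -- fderiv of f as a function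
  have hQ1 : ContDiff ℝ 1 (fderiv ℝ Q) := hQ.fderiv_right (by norm_num)
  have hQ1d : Differentiable ℝ (fderiv ℝ Q) := hQ1.differentiable one_ne_zero
  have hfd' : fderiv ℝ f = fun W =>
      (show Matrix (Fin d) (Fin r) ℝ →L[ℝ] ℝ from (ContinuousLinearMap.compL ℝ (Matrix (Fin d) (Fin r) ℝ)
        (Matrix (Fin d) (Fin d) ℝ) ℝ) (clm₂ Hf (ψ W)) (Tc W)) + fderiv ℝ Q W := by
    funext W
    rw [hf]
    exact ((hg W).add (hQd W).hasFDerivAt).fderiv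
  have h2f : fderiv ℝ (fderiv ℝ f) U =
      (show Matrix (Fin d) (Fin r) ℝ →L[ℝ] Matrix (Fin d) (Fin r) ℝ →L[ℝ] ℝ from
        (ContinuousLinearMap.compL ℝ (Matrix (Fin d) (Fin r) ℝ)
          (Matrix (Fin d) (Fin d) ℝ) ℝ).precompR _ (clm₂ Hf (ψ U)) Tc +
        (ContinuousLinearMap.compL ℝ (Matrix (Fin d) (Fin r) ℝ)
          (Matrix (Fin d) (Fin d) ℝ) ℝ).precompL _ ((clm₂ Hf).comp (Tc U)) (Tc U)) +
      fderiv ℝ (fderiv ℝ Q) U := by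
    rw [hfd']
    exact (hG2.add (hQ1d U).hasFDerivAt).fderiv
  rw [iteratedFDeriv_two_apply f U, iteratedFDeriv_two_apply Q U]
  change fderiv ℝ (fderiv ℝ f) U Δ Δ = _ - _ + _ + (fderiv ℝ (fderiv ℝ Q) U Δ Δ - _)
  have hev : fderiv ℝ (fderiv ℝ f) U Δ Δ = Hf (ψ U) (Δ * Δᵀ + Δ * Δᵀ) +
      Hf (U * Δᵀ + Δ * Uᵀ) (U * Δᵀ + Δ * Uᵀ) + fderiv ℝ (fderiv ℝ Q) U Δ Δ := by
    rw [h2f]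
    rfl
  rw [hev]
  simp only [Matrix.cons_val_zero, Matrix.cons_val_one, Matrix.head_cons,
    ContinuousLinearMap.add_apply, ContinuousLinearMap.precompR,
    ContinuousLinearMap.precompL, ContinuousLinearMap.coe_comp', Function.comp_apply,
    ContinuousLinearMap.flip_apply, ContinuousLinearMap.compL_apply, clm₂_apply,
    Tc_apply, hfderiv]
  rw [hkey]
  have hψU : ψ U = U * Uᵀ - Ustar * Ustarᵀ := rfl
  rw [hψU] at *
  simp only [map_add, LinearMap.add_apply]
  linear_combination hHsymm (Δ * Δᵀ) (U * Uᵀ - Ustar * Ustarᵀ)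
end
end

section
/- Fix matrices S* and A in ℝ^{d1×d2}, and let S_γα be the set of matrices with at most γα·d2 nonzero entries per row, γα·d1 nonzero entries per column, and max-entry bounded by a fixed threshold τ ≥ ‖S*‖_∞. Suppose S* has at most α·d2 nonzero entries per row and α·d1 per column. Let S_opt = argmin_{S ∈ S_γα} ‖S − S* + A‖_F², with supports Ω (of S_opt) and Ω* (of S*). Then ‖S_opt − S*‖_F² ≤ 2‖A‖²_{Ω∪Ω*} + (8/(γ−1))·‖A‖_F², where ‖A‖²_Σ denotes the sum of squares of entries of A over index set Σ. -/
open Matrix BigOperators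
open scoped Classical

noncomputable section

namespace Stmt12Aux


def clampR (τ x : ℝ) : ℝ := max (-τ) (min τ x)

def FR (τ t : ℝ) : ℝ := if t ≤ τ then t^2 else 2*τ*t - τ^2

lemma clampR_cases {τ : ℝ} (hτ : 0 ≤ τ) (x : ℝ) :
    (x ≤ -τ ∧ clampR τ x = -τ) ∨ (-τ ≤ x ∧ x ≤ τ ∧ clampR τ x = x) ∨ (τ ≤ x ∧ clampR τ x = τ) := by
  rcases le_total x (-τ) with h1 | h1
  · exact Or.inl ⟨h1, by rw [clampR, min_eq_right (le_trans h1 (by linarith)), max_eq_left h1]⟩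
  · rcases le_total x τ with h2 | h2
    · exact Or.inr (Or.inl ⟨h1, h2, by rw [clampR, min_eq_right h2, max_eq_right h1]⟩)
    · exact Or.inr (Or.inr ⟨h2, by rw [clampR, min_eq_left h2, max_eq_right (by linarith)]⟩)

lemma clampR_abs_le {τ : ℝ} (hτ : 0 ≤ τ) (x : ℝ) : |clampR τ x| ≤ τ := by
  rcases clampR_cases hτ x with ⟨h, e⟩ | ⟨h1, h2, e⟩ | ⟨h, e⟩ <;> rw [e, abs_le] <;>
    constructor <;> linarith

lemma clampR_opt {τ s : ℝ} (hτ : 0 ≤ τ) (hs : |s| ≤ τ) (x : ℝ) :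
    (clampR τ x - x)^2 ≤ (s - x)^2 := by
  rw [abs_le] at hs
  rcases clampR_cases hτ x with ⟨h, e⟩ | ⟨h1, h2, e⟩ | ⟨h, e⟩ <;> rw [e]
  · nlinarith [hs.1, hs.2, mul_nonneg (show (0:ℝ) ≤ s + τ by linarith) (show (0:ℝ) ≤ s - τ - 2*x by linarith)]
  · nlinarith [sq_nonneg (s - x)]
  · nlinarith [hs.1, hs.2, mul_nonneg (show (0:ℝ) ≤ τ - s by linarith) (show (0:ℝ) ≤ 2*x - τ - s by linarith)]

lemma FR_eq {τ : ℝ} (hτ : 0 ≤ τ) (x : ℝ) :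
    x^2 - (clampR τ x - x)^2 = FR τ |x| := by
  rcases clampR_cases hτ x with ⟨h, e⟩ | ⟨h1, h2, e⟩ | ⟨h, e⟩ <;> rw [e]
  · rw [abs_of_nonpos (by linarith), FR]
    split_ifs with h'
    · have : x = -τ := by linarith
      subst this; ring
    · ring
  · rw [FR, if_pos (abs_le.mpr ⟨h1, h2⟩), sq_abs]; ring
  · rw [abs_of_nonneg (by linarith), FR]
    split_ifs with h'
    · have : x = τ := le_antisymm h' h
      subst this; ring
    · ring

lemma FR_zero {τ : ℝ} (hτ : 0 ≤ τ) : FR τ 0 = 0 := by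
  simp [FR, hτ]

lemma FR_mono {τ a b : ℝ} (hτ : 0 ≤ τ) (ha : 0 ≤ a) (hab : a ≤ b) : FR τ a ≤ FR τ b := by
  unfold FR
  split_ifs with h1 h2 h2
  · nlinarith
  · nlinarith [mul_nonneg hτ ha, mul_nonneg hτ (show (0:ℝ) ≤ b - τ by linarith)]
  · linarith
  · nlinarith [mul_nonneg hτ (show (0:ℝ) ≤ b - a by linarith)]

lemma FR_le_imp {τ a b : ℝ} (hτ : 0 < τ) (ha : 0 ≤ a) (hb : 0 ≤ b) (h : FR τ a ≤ FR τ b) :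
    a ≤ b := by
  by_contra hab
  push_neg at hab
  have : FR τ b < FR τ a := by
    unfold FR
    split_ifs with h1 h2 h2
    · nlinarith
    · nlinarith [mul_pos hτ (show (0:ℝ) < a - τ by linarith)]
    · linarith
    · nlinarith [mul_pos hτ (show (0:ℝ) < a - b by linarith)]
  linarith

lemma FR_superadd {τ a b : ℝ} (hτ : 0 ≤ τ) (ha : 0 ≤ a) (hb : 0 ≤ b) :
    FR τ a + FR τ b ≤ FR τ (a + b) := by
  unfold FR
  split_ifs with h1 h2 h3 h3 h4 h5 h5
  · nlinarith [mul_nonneg ha hb]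
  · nlinarith [mul_nonneg (show (0:ℝ) ≤ τ - a by linarith) (show (0:ℝ) ≤ τ - b by linarith),
      mul_nonneg ha hb]
  · linarith
  · nlinarith [mul_nonneg ha (show (0:ℝ) ≤ 2*τ - a by linarith)]
  · linarith
  · nlinarith [mul_nonneg hb (show (0:ℝ) ≤ 2*τ - b by linarith)]
  · linarith
  · nlinarith [sq_nonneg τ]

lemma proj_nonexp {τ u s x : ℝ} (hτ : 0 ≤ τ) (hu : |u| ≤ τ) (hs : |s| ≤ τ)
    (h : (u - x)^2 ≤ (clampR τ x - x)^2) : (u - s)^2 ≤ (x - s)^2 := by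
  rw [abs_le] at hu hs
  rcases clampR_cases hτ x with ⟨h1, e⟩ | ⟨h1, h2, e⟩ | ⟨h1, e⟩ <;> rw [e] at h
  · have h3 : u = -τ := by nlinarith [hu.1, mul_nonneg (show (0:ℝ) ≤ u + τ by linarith) (show (0:ℝ) ≤ u - τ - 2*x by linarith)]
    rw [h3]
    nlinarith [mul_nonneg (show (0:ℝ) ≤ -τ - x by linarith) (show (0:ℝ) ≤ -x - s + (-τ - s) + (τ - s) + (s + τ) by linarith)]
  · have h3 : u = x := by nlinarith [sq_nonneg (u - x)]
    rw [h3]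
  · have h3 : u = τ := by nlinarith [hu.2, mul_nonneg (show (0:ℝ) ≤ τ - u by linarith) (show (0:ℝ) ≤ 2*x - τ - u by linarith)]
    rw [h3]
    nlinarith [mul_nonneg (show (0:ℝ) ≤ x - τ by linarith) (show (0:ℝ) ≤ x + τ - 2*s by linarith)]



lemma frobSq_eq_sum_prod {d1 d2 : ℕ} (M : Matrix (Fin d1) (Fin d2) ℝ) :
    frobSq M = ∑ p : Fin d1 × Fin d2, (M p.1 p.2)^2 := by
  rw [frobSq, Fintype.sum_prod_type]

lemma frobSq_diff {d1 d2 : ℕ} (M N : Matrix (Fin d1) (Fin d2) ℝ)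
    (P : Finset (Fin d1 × Fin d2)) (h : ∀ p : Fin d1 × Fin d2, p ∉ P → M p.1 p.2 = N p.1 p.2) :
    frobSq M - frobSq N = ∑ p ∈ P, ((M p.1 p.2)^2 - (N p.1 p.2)^2) := by
  rw [frobSq_eq_sum_prod, frobSq_eq_sum_prod, ← Finset.sum_sub_distrib]
  exact (Finset.sum_subset (Finset.subset_univ P) (fun p _ hp => by rw [h p hp]; ring)).symm

lemma sum_pairs {d1 d2 : ℕ} (S : Finset (Fin d1 × Fin d2)) (f : Fin d1 → Fin d2 → ℝ) :
    ∑ p ∈ S, f p.1 p.2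
      = ∑ i, ∑ j ∈ Finset.univ.filter (fun j => (i, j) ∈ S), f i j := by
  have h1 : ∑ p ∈ S, f p.1 p.2
      = ∑ p ∈ (Finset.univ : Finset (Fin d1 × Fin d2)), if p ∈ S then f p.1 p.2 else 0 := by
    rw [Finset.sum_ite_mem, Finset.univ_inter]
  rw [h1, Fintype.sum_prod_type]
  exact Finset.sum_congr rfl (fun i _ => (Finset.sum_filter _ _).symm)

lemma sum_pairs' {d1 d2 : ℕ} (S : Finset (Fin d1 × Fin d2)) (f : Fin d1 → Fin d2 → ℝ) :
    ∑ p ∈ S, f p.1 p.2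
      = ∑ j, ∑ i ∈ Finset.univ.filter (fun i => (i, j) ∈ S), f i j := by
  have h1 : ∑ p ∈ S, f p.1 p.2
      = ∑ p ∈ (Finset.univ : Finset (Fin d1 × Fin d2)), if p ∈ S then f p.1 p.2 else 0 := by
    rw [Finset.sum_ite_mem, Finset.univ_inter]
  rw [h1, Fintype.sum_prod_type, Finset.sum_comm]
  exact Finset.sum_congr rfl (fun j _ => (Finset.sum_filter _ _).symm)

lemma counting {n : ℕ} {γ a u : ℝ} (hγ : 1 < γ) (A St : Fin n → ℝ) (R : Finset (Fin n))
    (hu0 : 0 ≤ u) (hu : ∀ j ∈ R, St j = 0 → u ≤ |A j|)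
    (hfull : γ * a < R.card + 1)
    (hSt : ((Finset.univ.filter fun j => St j ≠ 0).card : ℝ) ≤ a) :
    (γ - 1) * ((((Finset.univ.filter fun j => St j ≠ 0)) \ R).card : ℝ) * u^2
      ≤ ∑ j, (A j)^2 := by
  set Rs := Finset.univ.filter (fun j => St j ≠ 0) with hRs
  by_cases hc : (Rs \ R).card = 0
  · rw [hc]
    simp only [Nat.cast_zero, mul_zero, zero_mul]
    positivity
  · have hc1 : (1:ℝ) ≤ ((Rs \ R).card : ℝ) := by
      have := Nat.one_le_iff_ne_zero.mpr hc
      exact_mod_cast this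
    set T := R.filter (fun j => St j = 0) with hT
    have hTcard : T.card + (Rs ∩ R).card = R.card := by
      have e : R.filter (fun j => ¬ St j = 0) = Rs ∩ R := by
        ext j; simp [hRs, Finset.mem_inter, and_comm]
      rw [hT, ← e, Finset.card_filter_add_card_filter_not]
    have hinter : (Rs ∩ R).card + (Rs \ R).card = Rs.card :=
      Finset.card_inter_add_card_sdiff Rs R
    have hcard_le : ((Rs \ R).card : ℝ) ≤ a :=
      le_trans (Nat.cast_le.mpr (Finset.card_le_card Finset.sdiff_subset)) hSt
    have key : (γ - 1) * ((Rs \ R).card : ℝ) ≤ (T.card : ℝ) := by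
      have e1 := congrArg (Nat.cast : ℕ → ℝ) hTcard
      have e2 := congrArg (Nat.cast : ℕ → ℝ) hinter
      push_cast at e1 e2
      nlinarith [mul_nonneg (show (0:ℝ) ≤ γ - 1 by linarith)
        (show (0:ℝ) ≤ a - ((Rs \ R).card : ℝ) by linarith)]
    calc (γ - 1) * ((Rs \ R).card : ℝ) * u^2 ≤ (T.card : ℝ) * u^2 :=
          mul_le_mul_of_nonneg_right key (sq_nonneg u)
      _ = ∑ _j ∈ T, u^2 := by rw [Finset.sum_const, nsmul_eq_mul]
      _ ≤ ∑ j ∈ T, (A j)^2 := by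
          refine Finset.sum_le_sum (fun j hj => ?_)
          rw [hT, Finset.mem_filter] at hj
          have h2 : u ≤ |A j| := hu j hj.1 hj.2
          calc u^2 ≤ |A j|^2 := by nlinarith
            _ = (A j)^2 := sq_abs _
      _ ≤ ∑ j, (A j)^2 :=
          Finset.sum_le_sum_of_subset_of_nonneg (Finset.subset_univ T)
            (fun j _ _ => sq_nonneg _)

end Stmt12Aux

open Stmt12Aux
/-- Robust PCA sparse-estimation lemma: with `S_γα` the set of matrices with at most
`γα·d2` nonzeros per row, `γα·d1` per column and entries bounded by `τ ≥ ‖S*‖_∞`,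
if `S*` is `α`-sparse and `S_opt = argmin_{S ∈ S_γα} ‖S − S* + A‖_F²`, with supports
`Ω` (of `S_opt`) and `Ω*` (of `S*`), then
`‖S_opt − S*‖_F² ≤ 2‖A‖²_{Ω∪Ω*} + (8/(γ−1))‖A‖_F²`. -/
theorem stmt12 {d1 d2 : ℕ} (Sstar Amat : Matrix (Fin d1) (Fin d2) ℝ)
    (γ α τ : ℝ) (hγ : 1 < γ) (hα : 0 < α) (hα1 : α < 1) (hγα : γ * α ≤ 1)
    (hτ : ∀ i j, |Sstar i j| ≤ τ)
    (hSstarRow : ∀ i : Fin d1,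
      ((Finset.univ.filter fun j : Fin d2 => Sstar i j ≠ 0).card : ℝ) ≤ α * d2)
    (hSstarCol : ∀ j : Fin d2,
      ((Finset.univ.filter fun i : Fin d1 => Sstar i j ≠ 0).card : ℝ) ≤ α * d1)
    (memS : Matrix (Fin d1) (Fin d2) ℝ → Prop)
    (hmemS : ∀ S, memS S ↔
      ((∀ i : Fin d1,
          ((Finset.univ.filter fun j : Fin d2 => S i j ≠ 0).card : ℝ) ≤ γ * α * d2) ∧
        (∀ j : Fin d2,
          ((Finset.univ.filter fun i : Fin d1 => S i j ≠ 0).card : ℝ) ≤ γ * α * d1) ∧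
        (∀ i j, |S i j| ≤ τ)))
    (Sopt : Matrix (Fin d1) (Fin d2) ℝ) (hSoptMem : memS Sopt)
    (hopt : ∀ S, memS S → frobSq (Sopt - Sstar + Amat) ≤ frobSq (S - Sstar + Amat)) :
    frobSq (Sopt - Sstar) ≤
      2 * (∑ p ∈ ((Finset.univ.filter fun p : Fin d1 × Fin d2 => Sopt p.1 p.2 ≠ 0) ∪
            (Finset.univ.filter fun p : Fin d1 × Fin d2 => Sstar p.1 p.2 ≠ 0)),
          (Amat p.1 p.2) ^ 2) +
        (8 / (γ - 1)) * frobSq Amat := by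
  obtain ⟨hRow, hCol, hBnd⟩ := (hmemS Sopt).mp hSoptMem
  -- abbreviations
  set Rw : Fin d1 → Finset (Fin d2) :=
    fun i => Finset.univ.filter (fun j => Sopt i j ≠ 0) with hRw_def
  set Cw : Fin d2 → Finset (Fin d1) :=
    fun j => Finset.univ.filter (fun i => Sopt i j ≠ 0) with hCw_def
  set RwS : Fin d1 → Finset (Fin d2) :=
    fun i => Finset.univ.filter (fun j => Sstar i j ≠ 0) with hRwS_def
  set CwS : Fin d2 → Finset (Fin d1) :=
    fun j => Finset.univ.filter (fun i => Sstar i j ≠ 0) with hCwS_def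
  have hRw' : ∀ i, ((Rw i).card : ℝ) ≤ γ * α * d2 := by
    intro i; simpa [hRw_def] using hRow i
  have hCw' : ∀ j, ((Cw j).card : ℝ) ≤ γ * α * d1 := by
    intro j; simpa [hCw_def] using hCol j
  have hRwS' : ∀ i, ((RwS i).card : ℝ) ≤ α * d2 := by
    intro i; simpa [hRwS_def] using hSstarRow i
  have hCwS' : ∀ j, ((CwS j).card : ℝ) ≤ α * d1 := by
    intro j; simpa [hCwS_def] using hSstarCol j
  have hmemRw : ∀ i j, j ∈ Rw i ↔ Sopt i j ≠ 0 := by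
    intro i j; simp [hRw_def]
  have hmemCw : ∀ i j, i ∈ Cw j ↔ Sopt i j ≠ 0 := by
    intro i j; simp [hCw_def]
  -- the u and v thresholds
  set u : Fin d1 → ℝ := fun i =>
    if h : (Rw i).Nonempty ∧ γ * α * d2 < (Rw i).card + 1
    then (Rw i).inf' h.1 (fun j => |Sstar i j - Amat i j|) else 0 with hu_def
  set v : Fin d2 → ℝ := fun j =>
    if h : (Cw j).Nonempty ∧ γ * α * d1 < (Cw j).card + 1
    then (Cw j).inf' h.1 (fun i => |Sstar i j - Amat i j|) else 0 with hv_def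
  have hu0 : ∀ i, 0 ≤ u i := by
    intro i; rw [hu_def]; dsimp only; split_ifs with h
    · exact Finset.le_inf' h.1 _ (fun j _ => abs_nonneg _)
    · exact le_refl 0
  have hv0 : ∀ j, 0 ≤ v j := by
    intro j; rw [hv_def]; dsimp only; split_ifs with h
    · exact Finset.le_inf' h.1 _ (fun i _ => abs_nonneg _)
    · exact le_refl 0
  -- generic feasibility of exchange matrices
  have memS_ex : ∀ (i : Fin d1) (j : Fin d2), Sopt i j = 0 → 0 ≤ τ →
      ∀ Z : Finset (Fin d1 × Fin d2),
      ((∃ j', (i, j') ∈ Z ∧ Sopt i j' ≠ 0) ∨ ((Rw i).card : ℝ) + 1 ≤ γ * α * d2) →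
      ((∃ i', (i', j) ∈ Z ∧ Sopt i' j ≠ 0) ∨ ((Cw j).card : ℝ) + 1 ≤ γ * α * d1) →
      memS (fun a b => if (a, b) = (i, j) then clampR τ (Sstar i j - Amat i j)
        else if (a, b) ∈ Z then 0 else Sopt a b) := by
    intro i j hij hτ0 Z hrowZ hcolZ
    set S' : Matrix (Fin d1) (Fin d2) ℝ := fun a b =>
      if (a, b) = (i, j) then clampR τ (Sstar i j - Amat i j)
      else if (a, b) ∈ Z then 0 else Sopt a b with hS'
    have hsupp : ∀ a b, S' a b ≠ 0 → ((a, b) = (i, j) ∨ ((a, b) ∉ Z ∧ Sopt a b ≠ 0)) := by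
      intro a b h
      by_cases h1 : (a, b) = (i, j)
      · exact Or.inl h1
      · rw [hS'] at h; dsimp only at h; rw [if_neg h1] at h
        by_cases h2 : ((a, b) : Fin d1 × Fin d2) ∈ Z
        · rw [if_pos h2] at h; exact absurd rfl h
        · rw [if_neg h2] at h; exact Or.inr ⟨h2, h⟩
    refine (hmemS _).mpr ⟨?_, ?_, ?_⟩
    · intro a
      by_cases ha : a = i
      · rcases hrowZ with ⟨j', hj'Z, hj'ne⟩ | hroom
        · have hj'Rw : j' ∈ Rw i := (hmemRw i j').mpr hj'ne
          have hsub : (Finset.univ.filter fun b => S' a b ≠ 0)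
              ⊆ insert j ((Rw i).erase j') := by
            intro b hb
            rw [Finset.mem_filter] at hb
            rcases hsupp a b hb.2 with h1 | ⟨h2, h3⟩
            · simp only [Prod.mk.injEq] at h1; rw [h1.2]; exact Finset.mem_insert_self j _
            · refine Finset.mem_insert_of_mem (Finset.mem_erase.mpr ⟨?_, ?_⟩)
              · rintro rfl; rw [ha] at h2; exact h2 hj'Z
              · rw [ha] at h3; exact (hmemRw i b).mpr h3
          have hcard : (Finset.univ.filter fun b => S' a b ≠ 0).card ≤ (Rw i).card := by
            refine le_trans (Finset.card_le_card hsub) ?_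
            refine le_trans (Finset.card_insert_le _ _) ?_
            rw [Finset.card_erase_of_mem hj'Rw]
            have h1 : 1 ≤ (Rw i).card := Finset.card_pos.mpr ⟨j', hj'Rw⟩
            omega
          exact le_trans (Nat.cast_le.mpr hcard) (hRw' i)
        · have hsub : (Finset.univ.filter fun b => S' a b ≠ 0) ⊆ insert j (Rw i) := by
            intro b hb
            rw [Finset.mem_filter] at hb
            rcases hsupp a b hb.2 with h1 | ⟨h2, h3⟩
            · simp only [Prod.mk.injEq] at h1; rw [h1.2]; exact Finset.mem_insert_self j _
            · rw [ha] at h3; exact Finset.mem_insert_of_mem ((hmemRw i b).mpr h3)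
          have hcard : (Finset.univ.filter fun b => S' a b ≠ 0).card ≤ (Rw i).card + 1 :=
            le_trans (Finset.card_le_card hsub) (Finset.card_insert_le _ _)
          refine le_trans (Nat.cast_le.mpr hcard) ?_
          push_cast
          linarith [hroom]
      · have hsub : (Finset.univ.filter fun b => S' a b ≠ 0) ⊆ Rw a := by
          intro b hb
          rw [Finset.mem_filter] at hb
          rcases hsupp a b hb.2 with h1 | ⟨h2, h3⟩
          · simp only [Prod.mk.injEq] at h1; exact absurd h1.1 ha
          · exact (hmemRw a b).mpr h3
        exact le_trans (Nat.cast_le.mpr (Finset.card_le_card hsub)) (hRw' a)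
    · intro b
      by_cases hb : b = j
      · rcases hcolZ with ⟨i', hi'Z, hi'ne⟩ | hroom
        · have hi'Cw : i' ∈ Cw j := (hmemCw i' j).mpr hi'ne
          have hsub : (Finset.univ.filter fun a => S' a b ≠ 0)
              ⊆ insert i ((Cw j).erase i') := by
            intro a ha
            rw [Finset.mem_filter] at ha
            rcases hsupp a b ha.2 with h1 | ⟨h2, h3⟩
            · simp only [Prod.mk.injEq] at h1; rw [h1.1]; exact Finset.mem_insert_self i _
            · refine Finset.mem_insert_of_mem (Finset.mem_erase.mpr ⟨?_, ?_⟩)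
              · rintro rfl; rw [hb] at h2; exact h2 hi'Z
              · rw [hb] at h3; exact (hmemCw a j).mpr h3
          have hcard : (Finset.univ.filter fun a => S' a b ≠ 0).card ≤ (Cw j).card := by
            refine le_trans (Finset.card_le_card hsub) ?_
            refine le_trans (Finset.card_insert_le _ _) ?_
            rw [Finset.card_erase_of_mem hi'Cw]
            have h1 : 1 ≤ (Cw j).card := Finset.card_pos.mpr ⟨i', hi'Cw⟩
            omega
          exact le_trans (Nat.cast_le.mpr hcard) (hCw' j)
        · have hsub : (Finset.univ.filter fun a => S' a b ≠ 0) ⊆ insert i (Cw j) := by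
            intro a ha
            rw [Finset.mem_filter] at ha
            rcases hsupp a b ha.2 with h1 | ⟨h2, h3⟩
            · simp only [Prod.mk.injEq] at h1; rw [h1.1]; exact Finset.mem_insert_self i _
            · rw [hb] at h3; exact Finset.mem_insert_of_mem ((hmemCw a j).mpr h3)
          have hcard : (Finset.univ.filter fun a => S' a b ≠ 0).card ≤ (Cw j).card + 1 :=
            le_trans (Finset.card_le_card hsub) (Finset.card_insert_le _ _)
          refine le_trans (Nat.cast_le.mpr hcard) ?_
          push_cast
          linarith [hroom]
      · have hsub : (Finset.univ.filter fun a => S' a b ≠ 0) ⊆ Cw b := by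
          intro a ha
          rw [Finset.mem_filter] at ha
          rcases hsupp a b ha.2 with h1 | ⟨h2, h3⟩
          · simp only [Prod.mk.injEq] at h1; exact absurd h1.2 hb
          · exact (hmemCw a b).mpr h3
        exact le_trans (Nat.cast_le.mpr (Finset.card_le_card hsub)) (hCw' b)
    · intro a b
      rw [hS']; dsimp only
      split_ifs with h1 h2
      · exact clampR_abs_le hτ0 _
      · simpa using hτ0
      · exact hBnd a b

  -- the exchange inequality
  have exchange : ∀ (i : Fin d1) (j : Fin d2) (Z : Finset (Fin d1 × Fin d2)),
      0 ≤ τ → Sopt i j = 0 → (i, j) ∉ Z →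
      memS (fun a b => if (a, b) = (i, j) then clampR τ (Sstar i j - Amat i j)
        else if (a, b) ∈ Z then 0 else Sopt a b) →
      FR τ |Sstar i j - Amat i j| ≤ ∑ p ∈ Z, FR τ |Sstar p.1 p.2 - Amat p.1 p.2| := by
    intro i j Z hτ0 hij hZ hmem'
    set S' : Matrix (Fin d1) (Fin d2) ℝ := fun a b =>
      if (a, b) = (i, j) then clampR τ (Sstar i j - Amat i j)
      else if (a, b) ∈ Z then 0 else Sopt a b with hS'
    have hle := hopt S' hmem'
    have hout : ∀ p : Fin d1 × Fin d2, p ∉ insert (i, j) Z →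
        (S' - Sstar + Amat) p.1 p.2 = (Sopt - Sstar + Amat) p.1 p.2 := by
      intro p hp
      simp only [Finset.mem_insert, not_or] at hp
      have h1 : S' p.1 p.2 = Sopt p.1 p.2 := by
        rw [hS']; dsimp only
        rw [Prod.mk.eta, if_neg hp.1, if_neg hp.2]
      simp only [Matrix.sub_apply, Matrix.add_apply, h1]
    have hdiff := frobSq_diff (S' - Sstar + Amat) (Sopt - Sstar + Amat) (insert (i, j) Z) hout
    rw [Finset.sum_insert hZ] at hdiff
    have e1 : (S' - Sstar + Amat) (i, j).1 (i, j).2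
        = clampR τ (Sstar i j - Amat i j) - (Sstar i j - Amat i j) := by
      simp only [Matrix.sub_apply, Matrix.add_apply]
      rw [hS']; dsimp only; rw [if_pos rfl]; ring
    have e2 : (Sopt - Sstar + Amat) (i, j).1 (i, j).2 = -(Sstar i j - Amat i j) := by
      simp only [Matrix.sub_apply, Matrix.add_apply, hij]; ring
    have hfirst : ((S' - Sstar + Amat) (i, j).1 (i, j).2)^2
        - ((Sopt - Sstar + Amat) (i, j).1 (i, j).2)^2 = - FR τ |Sstar i j - Amat i j| := by
      rw [e1, e2, neg_sq]
      linarith [FR_eq hτ0 (Sstar i j - Amat i j)]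
    have hZle : ∑ p ∈ Z, (((S' - Sstar + Amat) p.1 p.2)^2 - ((Sopt - Sstar + Amat) p.1 p.2)^2)
        ≤ ∑ p ∈ Z, FR τ |Sstar p.1 p.2 - Amat p.1 p.2| := by
      refine Finset.sum_le_sum (fun p hp => ?_)
      have hpne : ((p.1, p.2) : Fin d1 × Fin d2) ≠ (i, j) := by
        rw [Prod.mk.eta]; rintro rfl; exact hZ hp
      have e3 : (S' - Sstar + Amat) p.1 p.2 = -(Sstar p.1 p.2 - Amat p.1 p.2) := by
        simp only [Matrix.sub_apply, Matrix.add_apply]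
        rw [hS']; dsimp only; rw [if_neg hpne, if_pos (by rw [Prod.mk.eta]; exact hp)]; ring
      have e4 : (Sopt - Sstar + Amat) p.1 p.2
          = Sopt p.1 p.2 - (Sstar p.1 p.2 - Amat p.1 p.2) := by
        simp only [Matrix.sub_apply, Matrix.add_apply]; ring
      rw [e3, e4, neg_sq]
      have h5 := clampR_opt hτ0 (hBnd p.1 p.2) (Sstar p.1 p.2 - Amat p.1 p.2)
      have h6 := FR_eq hτ0 (Sstar p.1 p.2 - Amat p.1 p.2)
      linarith
    linarith [hle, hdiff, hfirst, hZle]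

  -- on Ω, the entrywise error is bounded by A
  have hOmega : ∀ i j, Sopt i j ≠ 0 → (Sopt i j - Sstar i j)^2 ≤ (Amat i j)^2 := by
    intro i j hne
    have hτ0 : 0 ≤ τ := le_trans (abs_nonneg _) (hBnd i j)
    set S' : Matrix (Fin d1) (Fin d2) ℝ := fun a b =>
      if (a, b) = (i, j) then clampR τ (Sstar i j - Amat i j) else Sopt a b with hS'
    have hmem' : memS S' := by
      refine (hmemS _).mpr ⟨?_, ?_, ?_⟩
      · intro a
        have hsub : (Finset.univ.filter fun b => S' a b ≠ 0)
            ⊆ Finset.univ.filter fun b => Sopt a b ≠ 0 := by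
          intro b hb
          rw [Finset.mem_filter] at hb ⊢
          refine ⟨Finset.mem_univ b, ?_⟩
          rw [hS'] at hb; dsimp only at hb
          by_cases h1 : ((a, b) : Fin d1 × Fin d2) = (i, j)
          · simp only [Prod.mk.injEq] at h1
            rw [h1.1, h1.2]; exact hne
          · rw [if_neg h1] at hb; exact hb.2
        exact le_trans (Nat.cast_le.mpr (Finset.card_le_card hsub)) (hRow a)
      · intro b
        have hsub : (Finset.univ.filter fun a => S' a b ≠ 0)
            ⊆ Finset.univ.filter fun a => Sopt a b ≠ 0 := by
          intro a ha
          rw [Finset.mem_filter] at ha ⊢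
          refine ⟨Finset.mem_univ a, ?_⟩
          rw [hS'] at ha; dsimp only at ha
          by_cases h1 : ((a, b) : Fin d1 × Fin d2) = (i, j)
          · simp only [Prod.mk.injEq] at h1
            rw [h1.1, h1.2]; exact hne
          · rw [if_neg h1] at ha; exact ha.2
        exact le_trans (Nat.cast_le.mpr (Finset.card_le_card hsub)) (hCol b)
      · intro a b
        rw [hS']; dsimp only
        split_ifs with h1
        · exact clampR_abs_le hτ0 _
        · exact hBnd a b
    have hle := hopt S' hmem'
    have hout : ∀ p : Fin d1 × Fin d2, p ∉ ({(i, j)} : Finset (Fin d1 × Fin d2)) →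
        (S' - Sstar + Amat) p.1 p.2 = (Sopt - Sstar + Amat) p.1 p.2 := by
      intro p hp
      rw [Finset.mem_singleton] at hp
      have h1 : S' p.1 p.2 = Sopt p.1 p.2 := by
        rw [hS']; dsimp only; rw [Prod.mk.eta, if_neg hp]
      simp only [Matrix.sub_apply, Matrix.add_apply, h1]
    have hdiff := frobSq_diff (S' - Sstar + Amat) (Sopt - Sstar + Amat) {(i, j)} hout
    rw [Finset.sum_singleton] at hdiff
    have e1 : (S' - Sstar + Amat) (i, j).1 (i, j).2
        = clampR τ (Sstar i j - Amat i j) - (Sstar i j - Amat i j) := by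
      simp only [Matrix.sub_apply, Matrix.add_apply]
      rw [hS']; dsimp only; rw [if_pos rfl]; ring
    have e2 : (Sopt - Sstar + Amat) (i, j).1 (i, j).2
        = Sopt i j - (Sstar i j - Amat i j) := by
      simp only [Matrix.sub_apply, Matrix.add_apply]; ring
    rw [e1, e2] at hdiff
    have hproj : (Sopt i j - (Sstar i j - Amat i j))^2
        ≤ (clampR τ (Sstar i j - Amat i j) - (Sstar i j - Amat i j))^2 := by linarith
    have := proj_nonexp hτ0 (hBnd i j) (hτ i j) hproj
    have e3 : (Sstar i j - Amat i j - Sstar i j)^2 = (Amat i j)^2 := by ring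
    linarith

  -- master per-entry bound on Ω* \ Ω
  have master : ∀ i j, Sopt i j = 0 → Sstar i j ≠ 0 →
      |Sstar i j - Amat i j| ≤ u i + v j := by
    intro i j h0 hs
    have hτpos : 0 < τ := lt_of_lt_of_le (abs_pos.mpr hs) (hτ i j)
    have hτ0 : 0 ≤ τ := hτpos.le
    have hαd2 : (1:ℝ) ≤ α * d2 := by
      have hjmem : j ∈ RwS i := by rw [hRwS_def]; simp [hs]
      have h1 : 1 ≤ (RwS i).card := Finset.card_pos.mpr ⟨j, hjmem⟩
      have h2 : (1:ℝ) ≤ ((RwS i).card : ℝ) := by exact_mod_cast h1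
      linarith [hRwS' i]
    have hαd1 : (1:ℝ) ≤ α * d1 := by
      have himem : i ∈ CwS j := by rw [hCwS_def]; simp [hs]
      have h1 : 1 ≤ (CwS j).card := Finset.card_pos.mpr ⟨i, himem⟩
      have h2 : (1:ℝ) ≤ ((CwS j).card : ℝ) := by exact_mod_cast h1
      linarith [hCwS' j]
    have hγ0 : (0:ℝ) ≤ γ := by linarith
    by_cases hfr : γ * α * d2 < (Rw i).card + 1 <;>
      by_cases hfc : γ * α * d1 < (Cw j).card + 1
    · -- both full
      have hcR : (0:ℝ) < ((Rw i).card : ℝ) := by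
        nlinarith [mul_le_mul_of_nonneg_left hαd2 hγ0]
      have hneR : (Rw i).Nonempty := Finset.card_pos.mp (by exact_mod_cast hcR)
      have hcC : (0:ℝ) < ((Cw j).card : ℝ) := by
        nlinarith [mul_le_mul_of_nonneg_left hαd1 hγ0]
      have hneC : (Cw j).Nonempty := Finset.card_pos.mp (by exact_mod_cast hcC)
      obtain ⟨j', hj'mem, hj'eq⟩ :=
        Finset.exists_mem_eq_inf' hneR (fun b => |Sstar i b - Amat i b|)
      obtain ⟨i', hi'mem, hi'eq⟩ :=
        Finset.exists_mem_eq_inf' hneC (fun a => |Sstar a j - Amat a j|)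
      have hui : u i = |Sstar i j' - Amat i j'| := by
        rw [hu_def]; dsimp only; rw [dif_pos ⟨hneR, hfr⟩]; exact hj'eq
      have hvj : v j = |Sstar i' j - Amat i' j| := by
        rw [hv_def]; dsimp only; rw [dif_pos ⟨hneC, hfc⟩]; exact hi'eq
      have hj'ne : Sopt i j' ≠ 0 := (hmemRw i j').mp hj'mem
      have hi'ne : Sopt i' j ≠ 0 := (hmemCw i' j).mp hi'mem
      have hjj' : j ≠ j' := by rintro rfl; exact hj'ne h0
      have hii' : i ≠ i' := by rintro rfl; exact hi'ne h0
      set Z : Finset (Fin d1 × Fin d2) := {(i, j'), (i', j)} with hZdef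
      have hijZ : (i, j) ∉ Z := by
        rw [hZdef]
        simp only [Finset.mem_insert, Finset.mem_singleton, Prod.mk.injEq, not_or]
        exact ⟨fun h => hjj' h.2, fun h => hii' h.1⟩
      have hmemZ := memS_ex i j h0 hτ0 Z
        (Or.inl ⟨j', by rw [hZdef]; simp, hj'ne⟩)
        (Or.inl ⟨i', by rw [hZdef]; simp, hi'ne⟩)
      have hex := exchange i j Z hτ0 h0 hijZ hmemZ
      have hne2 : ((i, j') : Fin d1 × Fin d2) ≠ (i', j) := by
        intro h1; rw [Prod.mk.injEq] at h1; exact hii' h1.1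
      rw [hZdef, Finset.sum_pair hne2] at hex
      dsimp only at hex
      rw [← hui, ← hvj] at hex
      exact FR_le_imp hτpos (abs_nonneg _) (add_nonneg (hu0 i) (hv0 j))
        (le_trans hex (FR_superadd hτ0 (hu0 i) (hv0 j)))
    · -- row full, column not full
      have hcR : (0:ℝ) < ((Rw i).card : ℝ) := by
        nlinarith [mul_le_mul_of_nonneg_left hαd2 hγ0]
      have hneR : (Rw i).Nonempty := Finset.card_pos.mp (by exact_mod_cast hcR)
      obtain ⟨j', hj'mem, hj'eq⟩ :=
        Finset.exists_mem_eq_inf' hneR (fun b => |Sstar i b - Amat i b|)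
      have hui : u i = |Sstar i j' - Amat i j'| := by
        rw [hu_def]; dsimp only; rw [dif_pos ⟨hneR, hfr⟩]; exact hj'eq
      have hj'ne : Sopt i j' ≠ 0 := (hmemRw i j').mp hj'mem
      have hjj' : j ≠ j' := by rintro rfl; exact hj'ne h0
      set Z : Finset (Fin d1 × Fin d2) := {(i, j')} with hZdef
      have hijZ : (i, j) ∉ Z := by
        rw [hZdef]
        intro h1; rw [Finset.mem_singleton, Prod.mk.injEq] at h1; exact hjj' h1.2
      have hmemZ := memS_ex i j h0 hτ0 Z
        (Or.inl ⟨j', by rw [hZdef]; simp, hj'ne⟩)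
        (Or.inr (by push_neg at hfc; linarith))
      have hex := exchange i j Z hτ0 h0 hijZ hmemZ
      rw [hZdef, Finset.sum_singleton] at hex
      dsimp only at hex
      rw [← hui] at hex
      have h1 : |Sstar i j - Amat i j| ≤ u i :=
        FR_le_imp hτpos (abs_nonneg _) (hu0 i) hex
      linarith [hv0 j]
    · -- column full, row not full
      have hcC : (0:ℝ) < ((Cw j).card : ℝ) := by
        nlinarith [mul_le_mul_of_nonneg_left hαd1 hγ0]
      have hneC : (Cw j).Nonempty := Finset.card_pos.mp (by exact_mod_cast hcC)
      obtain ⟨i', hi'mem, hi'eq⟩ :=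
        Finset.exists_mem_eq_inf' hneC (fun a => |Sstar a j - Amat a j|)
      have hvj : v j = |Sstar i' j - Amat i' j| := by
        rw [hv_def]; dsimp only; rw [dif_pos ⟨hneC, hfc⟩]; exact hi'eq
      have hi'ne : Sopt i' j ≠ 0 := (hmemCw i' j).mp hi'mem
      have hii' : i ≠ i' := by rintro rfl; exact hi'ne h0
      set Z : Finset (Fin d1 × Fin d2) := {(i', j)} with hZdef
      have hijZ : (i, j) ∉ Z := by
        rw [hZdef]
        intro h1; rw [Finset.mem_singleton, Prod.mk.injEq] at h1; exact hii' h1.1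
      have hmemZ := memS_ex i j h0 hτ0 Z
        (Or.inr (by push_neg at hfr; linarith))
        (Or.inl ⟨i', by rw [hZdef]; simp, hi'ne⟩)
      have hex := exchange i j Z hτ0 h0 hijZ hmemZ
      rw [hZdef, Finset.sum_singleton] at hex
      dsimp only at hex
      rw [← hvj] at hex
      have h1 : |Sstar i j - Amat i j| ≤ v j :=
        FR_le_imp hτpos (abs_nonneg _) (hv0 j) hex
      linarith [hu0 i]
    · -- neither full
      have hmemZ := memS_ex i j h0 hτ0 ∅
        (Or.inr (by push_neg at hfr; linarith))
        (Or.inr (by push_neg at hfc; linarith))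
      have hex := exchange i j ∅ hτ0 h0 (Finset.notMem_empty _) hmemZ
      rw [Finset.sum_empty] at hex
      have h1 : |Sstar i j - Amat i j| ≤ 0 :=
        FR_le_imp hτpos (abs_nonneg _) (le_refl 0) (by rw [FR_zero hτ0]; exact hex)
      linarith [hu0 i, hv0 j]

  -- row counting bound
  have countR : ∀ i, (γ - 1) * (((RwS i) \ (Rw i)).card : ℝ) * (u i)^2
      ≤ ∑ j, (Amat i j)^2 := by
    intro i
    by_cases h : (Rw i).Nonempty ∧ γ * α * d2 < (Rw i).card + 1
    · have hu_eq : u i = (Rw i).inf' h.1 (fun b => |Sstar i b - Amat i b|) := by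
        rw [hu_def]; dsimp only; rw [dif_pos h]
      have h_hu : ∀ j' ∈ Rw i, Sstar i j' = 0 → u i ≤ |Amat i j'| := by
        intro j' hj' hst
        rw [hu_eq]
        have h1 := Finset.inf'_le (fun b => |Sstar i b - Amat i b|) hj'
        rw [hst] at h1
        simp only [zero_sub, abs_neg] at h1; exact h1
      have h_full : γ * (α * d2) < ((Rw i).card : ℝ) + 1 := by
        rw [← mul_assoc]; exact h.2
      simp only [hRwS_def]
      exact counting hγ (fun b => Amat i b) (fun b => Sstar i b) (Rw i)
        (hu0 i) h_hu h_full (hSstarRow i)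
    · have hu_eq : u i = 0 := by rw [hu_def]; dsimp only; rw [dif_neg h]
      have h0 : (γ - 1) * (((RwS i) \ (Rw i)).card : ℝ) * (0:ℝ)^2 = 0 := by ring
      rw [hu_eq, h0]
      positivity
  have countC : ∀ j, (γ - 1) * (((CwS j) \ (Cw j)).card : ℝ) * (v j)^2
      ≤ ∑ i, (Amat i j)^2 := by
    intro j
    by_cases h : (Cw j).Nonempty ∧ γ * α * d1 < (Cw j).card + 1
    · have hv_eq : v j = (Cw j).inf' h.1 (fun a => |Sstar a j - Amat a j|) := by
        rw [hv_def]; dsimp only; rw [dif_pos h]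
      have h_hv : ∀ i' ∈ Cw j, Sstar i' j = 0 → v j ≤ |Amat i' j| := by
        intro i' hi' hst
        rw [hv_eq]
        have h1 := Finset.inf'_le (fun a => |Sstar a j - Amat a j|) hi'
        rw [hst] at h1
        simp only [zero_sub, abs_neg] at h1; exact h1
      have h_full : γ * (α * d1) < ((Cw j).card : ℝ) + 1 := by
        rw [← mul_assoc]; exact h.2
      simp only [hCwS_def]
      exact counting hγ (fun a => Amat a j) (fun a => Sstar a j) (Cw j)
        (hv0 j) h_hv h_full (hSstarCol j)
    · have hv_eq : v j = 0 := by rw [hv_def]; dsimp only; rw [dif_neg h]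
      have h0 : (γ - 1) * (((CwS j) \ (Cw j)).card : ℝ) * (0:ℝ)^2 = 0 := by ring
      rw [hv_eq, h0]
      positivity
  -- final assembly
  set Op := Finset.univ.filter (fun p : Fin d1 × Fin d2 => Sopt p.1 p.2 ≠ 0) with hOp_def
  set Os := Finset.univ.filter (fun p : Fin d1 × Fin d2 => Sstar p.1 p.2 ≠ 0) with hOs_def
  have hmemOp : ∀ p : Fin d1 × Fin d2, p ∈ Op ↔ Sopt p.1 p.2 ≠ 0 := by
    intro p; rw [hOp_def]; simp
  have hmemOs : ∀ p : Fin d1 × Fin d2, p ∈ Os ↔ Sstar p.1 p.2 ≠ 0 := by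
    intro p; rw [hOs_def]; simp
  have hpos : (0:ℝ) < γ - 1 := by linarith
  have hsplit1 : ∑ p ∈ (Op ∪ (Os \ Op)), ((Sopt - Sstar) p.1 p.2)^2
      = frobSq (Sopt - Sstar) := by
    rw [frobSq_eq_sum_prod]
    refine Finset.sum_subset (Finset.subset_univ _) (fun p _ hp => ?_)
    rw [Finset.mem_union, Finset.mem_sdiff] at hp
    push_neg at hp
    have h1 : Sopt p.1 p.2 = 0 := by
      by_contra hc; exact hp.1 ((hmemOp p).mpr hc)
    have h2 : Sstar p.1 p.2 = 0 := by
      by_contra hc; exact hp.1 (hp.2 ((hmemOs p).mpr hc))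
    simp [Matrix.sub_apply, h1, h2]
  have hsum_split : frobSq (Sopt - Sstar)
      = ∑ p ∈ Op, ((Sopt - Sstar) p.1 p.2)^2 + ∑ p ∈ Os \ Op, ((Sopt - Sstar) p.1 p.2)^2 := by
    rw [← hsplit1, Finset.sum_union Finset.disjoint_sdiff]
  have h1 : ∑ p ∈ Op, ((Sopt - Sstar) p.1 p.2)^2 ≤ ∑ p ∈ Op, (Amat p.1 p.2)^2 := by
    refine Finset.sum_le_sum (fun p hp => ?_)
    have := hOmega p.1 p.2 ((hmemOp p).mp hp)
    simpa [Matrix.sub_apply] using this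
  have h2 : ∑ p ∈ Os \ Op, ((Sopt - Sstar) p.1 p.2)^2
      ≤ 4 * (∑ p ∈ Os \ Op, (u p.1)^2) + 4 * (∑ p ∈ Os \ Op, (v p.2)^2)
        + 2 * (∑ p ∈ Os \ Op, (Amat p.1 p.2)^2) := by
    have hstep : ∀ p ∈ Os \ Op, ((Sopt - Sstar) p.1 p.2)^2
        ≤ 4 * (u p.1)^2 + 4 * (v p.2)^2 + 2 * (Amat p.1 p.2)^2 := by
      intro p hp
      rw [Finset.mem_sdiff] at hp
      have h0 : Sopt p.1 p.2 = 0 := by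
        by_contra hc; exact hp.2 ((hmemOp p).mpr hc)
      have hsne : Sstar p.1 p.2 ≠ 0 := (hmemOs p).mp hp.1
      have hm := master p.1 p.2 h0 hsne
      have hx2 : (Sstar p.1 p.2 - Amat p.1 p.2)^2 ≤ (u p.1 + v p.2)^2 := by
        rw [← sq_abs]
        exact pow_le_pow_left₀ (abs_nonneg _) hm 2
      have he : (Sopt - Sstar) p.1 p.2 = -(Sstar p.1 p.2) := by
        rw [Matrix.sub_apply, h0, zero_sub]
      rw [he, neg_sq]
      nlinarith [hx2, sq_nonneg (u p.1 - v p.2), sq_nonneg (Sstar p.1 p.2 - 2 * Amat p.1 p.2)]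
    calc ∑ p ∈ Os \ Op, ((Sopt - Sstar) p.1 p.2)^2
        ≤ ∑ p ∈ Os \ Op, (4 * (u p.1)^2 + 4 * (v p.2)^2 + 2 * (Amat p.1 p.2)^2) :=
          Finset.sum_le_sum hstep
      _ = 4 * (∑ p ∈ Os \ Op, (u p.1)^2) + 4 * (∑ p ∈ Os \ Op, (v p.2)^2)
          + 2 * (∑ p ∈ Os \ Op, (Amat p.1 p.2)^2) := by
          rw [Finset.sum_add_distrib, Finset.sum_add_distrib,
            ← Finset.mul_sum, ← Finset.mul_sum, ← Finset.mul_sum]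
  have hU : ∑ p ∈ Os \ Op, (u p.1)^2 ≤ (1 / (γ - 1)) * frobSq Amat := by
    have e1 : ∑ p ∈ Os \ Op, (u p.1)^2
        = ∑ i, (((RwS i) \ (Rw i)).card : ℝ) * (u i)^2 := by
      rw [sum_pairs (Os \ Op) (fun i _ => (u i)^2)]
      refine Finset.sum_congr rfl (fun i _ => ?_)
      have hfe : Finset.univ.filter (fun j => (i, j) ∈ Os \ Op) = (RwS i) \ (Rw i) := by
        ext b
        simp [hOs_def, hOp_def, hRwS_def, hRw_def, Finset.mem_sdiff]
      rw [hfe, Finset.sum_const, nsmul_eq_mul]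
    rw [e1]
    have e2 : (1 / (γ - 1)) * frobSq Amat
        = ∑ i, (1 / (γ - 1)) * ∑ j, (Amat i j)^2 := by
      rw [← Finset.mul_sum]; rfl
    rw [e2]
    refine Finset.sum_le_sum (fun i _ => ?_)
    have hne : γ - 1 ≠ 0 := ne_of_gt hpos
    calc (((RwS i) \ (Rw i)).card : ℝ) * (u i)^2
        = (1 / (γ - 1)) * ((γ - 1) * (((RwS i) \ (Rw i)).card : ℝ) * (u i)^2) := by
          field_simp
      _ ≤ (1 / (γ - 1)) * ∑ j, (Amat i j)^2 :=
          mul_le_mul_of_nonneg_left (countR i) (by positivity)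
  have hV : ∑ p ∈ Os \ Op, (v p.2)^2 ≤ (1 / (γ - 1)) * frobSq Amat := by
    have e1 : ∑ p ∈ Os \ Op, (v p.2)^2
        = ∑ j, (((CwS j) \ (Cw j)).card : ℝ) * (v j)^2 := by
      rw [sum_pairs' (Os \ Op) (fun _ j => (v j)^2)]
      refine Finset.sum_congr rfl (fun j _ => ?_)
      have hfe : Finset.univ.filter (fun i => (i, j) ∈ Os \ Op) = (CwS j) \ (Cw j) := by
        ext a
        simp [hOs_def, hOp_def, hCwS_def, hCw_def, Finset.mem_sdiff]
      rw [hfe, Finset.sum_const, nsmul_eq_mul]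
    rw [e1]
    have e2 : (1 / (γ - 1)) * frobSq Amat
        = ∑ j, (1 / (γ - 1)) * ∑ i, (Amat i j)^2 := by
      rw [← Finset.mul_sum, frobSq, Finset.sum_comm]
    rw [e2]
    refine Finset.sum_le_sum (fun j _ => ?_)
    have hne : γ - 1 ≠ 0 := ne_of_gt hpos
    calc (((CwS j) \ (Cw j)).card : ℝ) * (v j)^2
        = (1 / (γ - 1)) * ((γ - 1) * (((CwS j) \ (Cw j)).card : ℝ) * (v j)^2) := by
          field_simp
      _ ≤ (1 / (γ - 1)) * ∑ i, (Amat i j)^2 :=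
          mul_le_mul_of_nonneg_left (countC j) (by positivity)
  have hsum_union : ∑ p ∈ Op ∪ Os, (Amat p.1 p.2)^2
      = ∑ p ∈ Op, (Amat p.1 p.2)^2 + ∑ p ∈ Os \ Op, (Amat p.1 p.2)^2 := by
    rw [← Finset.union_sdiff_self_eq_union, Finset.sum_union Finset.disjoint_sdiff]
  have hA0 : (0:ℝ) ≤ ∑ p ∈ Op, (Amat p.1 p.2)^2 :=
    Finset.sum_nonneg (fun p _ => sq_nonneg _)
  have h8 : (8 / (γ - 1)) * frobSq Amat = 8 * ((1 / (γ - 1)) * frobSq Amat) := by ring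
  rw [hsum_union]
  linarith [hsum_split, h1, h2, hU, hV, hA0, h8]
end
end

section
/- Let S be a d1×d2 matrix with at most k nonzero entries in each row, and let x ∈ ℝ^{d1}. Suppose for every (i,j) in some set Σ ⊆ supp(S) we have |S_{ij}|² ≤ (2/k)(‖e_i^T A‖² + ‖A e_j‖²) for a matrix A ∈ ℝ^{d1×d2}, where Σ has at most k entries per row and k entries per column. Then Σ_{(i,j)∈Σ} |S_{ij}|² ≤ 4‖A‖_F². -/
open Matrix BigOperators
open scoped Classical

noncomputable section

/-- Summation step in the robust PCA analysis: if `S` has at most `k` nonzero entries in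
each row, `Sig ⊆ supp(S)` has at most `k` entries per row and per column, and each entry of
`S` on `Sig` satisfies `|S_{ij}|² ≤ (2/k)(‖e_iᵀA‖² + ‖Ae_j‖²)`, then
`sum over Sig of |S_{ij}|² ≤ 4‖A‖_F²`. -/
theorem stmt13 {d1 d2 : ℕ} (S A : Matrix (Fin d1) (Fin d2) ℝ) (k : ℕ) (hk : 0 < k)
    (hSrow : ∀ i : Fin d1,
      (Finset.univ.filter fun j : Fin d2 => S i j ≠ 0).card ≤ k)
    (Sig : Finset (Fin d1 × Fin d2))
    (hsupp : ∀ p ∈ Sig, S p.1 p.2 ≠ 0)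
    (hSigRow : ∀ i : Fin d1, (Sig.filter fun p => p.1 = i).card ≤ k)
    (hSigCol : ∀ j : Fin d2, (Sig.filter fun p => p.2 = j).card ≤ k)
    (hbound : ∀ p ∈ Sig,
      |S p.1 p.2| ^ 2 ≤
        (2 / (k : ℝ)) * ((∑ j, (A p.1 j) ^ 2) + ∑ i, (A i p.2) ^ 2)) :
    ∑ p ∈ Sig, |S p.1 p.2| ^ 2 ≤ 4 * frobSq A := by
  have hk' : (0 : ℝ) < (k : ℝ) := by exact_mod_cast hk
  set R : Fin d1 → ℝ := fun i => ∑ j, (A i j) ^ 2 with hR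
  set C : Fin d2 → ℝ := fun j => ∑ i, (A i j) ^ 2 with hC
  have hRnn : ∀ i, 0 ≤ R i := fun i => Finset.sum_nonneg fun j _ => sq_nonneg _
  have hCnn : ∀ j, 0 ≤ C j := fun j => Finset.sum_nonneg fun i _ => sq_nonneg _
  have step1 : ∑ p ∈ Sig, |S p.1 p.2| ^ 2 ≤
      (2 / (k : ℝ)) * ∑ p ∈ Sig, (R p.1 + C p.2) := by
    rw [Finset.mul_sum]
    exact Finset.sum_le_sum hbound
  have hrow : ∑ p ∈ Sig, R p.1 ≤ (k : ℝ) * frobSq A := by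
    have : ∑ p ∈ Sig, R p.1 = ∑ i : Fin d1, ((Sig.filter fun p => p.1 = i).card : ℝ) * R i := by
      rw [← Finset.sum_fiberwise_of_maps_to (g := fun p => p.1) (t := Finset.univ)
        (fun p _ => Finset.mem_univ _)]
      refine Finset.sum_congr rfl fun i _ => ?_
      have he : ∀ p ∈ Sig.filter (fun p => p.1 = i), R p.1 = R i := fun p hp => by
        rw [(Finset.mem_filter.1 hp).2]
      rw [Finset.sum_congr rfl he, Finset.sum_const, nsmul_eq_mul]
    rw [this]
    have : (k : ℝ) * frobSq A = ∑ i : Fin d1, (k : ℝ) * R i := by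
      rw [← Finset.mul_sum]; rfl
    rw [this]
    refine Finset.sum_le_sum fun i _ => ?_
    exact mul_le_mul_of_nonneg_right (by exact_mod_cast hSigRow i) (hRnn i)
  have hfrob : frobSq A = ∑ j, C j := by
    rw [frobSq, Finset.sum_comm]
  have hcol : ∑ p ∈ Sig, C p.2 ≤ (k : ℝ) * frobSq A := by
    have h1 : ∑ p ∈ Sig, C p.2 = ∑ j : Fin d2, ((Sig.filter fun p => p.2 = j).card : ℝ) * C j := by
      rw [← Finset.sum_fiberwise_of_maps_to (g := fun p => p.2) (t := Finset.univ)
        (fun p _ => Finset.mem_univ _)]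
      refine Finset.sum_congr rfl fun j _ => ?_
      have he : ∀ p ∈ Sig.filter (fun p => p.2 = j), C p.2 = C j := fun p hp => by
        rw [(Finset.mem_filter.1 hp).2]
      rw [Finset.sum_congr rfl he, Finset.sum_const, nsmul_eq_mul]
    rw [h1, hfrob, Finset.mul_sum]
    refine Finset.sum_le_sum fun j _ => ?_
    exact mul_le_mul_of_nonneg_right (by exact_mod_cast hSigCol j) (hCnn j)
  calc ∑ p ∈ Sig, |S p.1 p.2| ^ 2 ≤ (2 / (k : ℝ)) * ∑ p ∈ Sig, (R p.1 + C p.2) := step1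
    _ = (2 / (k : ℝ)) * (∑ p ∈ Sig, R p.1 + ∑ p ∈ Sig, C p.2) := by rw [Finset.sum_add_distrib]
    _ ≤ (2 / (k : ℝ)) * ((k : ℝ) * frobSq A + (k : ℝ) * frobSq A) := by
        apply mul_le_mul_of_nonneg_left (add_le_add hrow hcol)
        positivity
    _ = 4 * frobSq A := by field_simp; ring
end
end
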